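/- arXiv:2308.06044 — 2 statements merged into one kernel-verified Lean document; each statement's English description precedes it below -/
import Mathlib

section
/- Let k, q ≥ 1 and let φ be a C^k_q-formula. Then for every n ≥ 1 there exists a finite formal ℝ-linear combination F̄ of graphs in L^k_q that models φ for graphs of size n. -/
set_option maxHeartbeats 1000000

/-! ## Bundled finite simple graphs and homomorphism counting -/

/-- A bundled finite simple graph (vertex set `Fin n`). -/
abbrev GraphB : Type := Σ n : ℕ, SimpleGraph (Fin n)

/-- The number of graph homomorphisms from `F` to `G`. -/
noncomputable def homCount {V W : Type*} (F : SimpleGraph V) (G : SimpleGraph W) : ℕ :=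
  Set.ncard {f : V → W | ∀ ⦃u v⦄, F.Adj u v → G.Adj (f u) (f v)}

/-- `G` and `H` are homomorphism indistinguishable over the class `𝓕`. -/
def HomIndist (𝓕 : Set GraphB) {V W : Type*} (G : SimpleGraph V) (H : SimpleGraph W) : Prop :=
  ∀ A ∈ 𝓕, homCount A.2 G = homCount A.2 H

/-- The homomorphism distinguishing closure of the class `𝓕`. -/
def hdCl (𝓕 : Set GraphB) : Set GraphB :=
  {A | ∀ G H : GraphB, HomIndist 𝓕 G.2 H.2 → homCount A.2 G.2 = homCount A.2 H.2}

/-! ## Pebble forest covers and the class `T^k_q` -/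

/-- A `k`-pebble forest cover of depth at most `q`.  The rooted forest is encoded by its
ancestor (partial) order `le`, in which the set of ancestors of any vertex is a chain. -/
structure PebbleForestCover {V : Type*} (G : SimpleGraph V) (k q : ℕ) where
  le : V → V → Prop
  le_refl : ∀ v, le v v
  le_antisymm : ∀ u v, le u v → le v u → u = v
  le_trans : ∀ u v w, le u v → le v w → le u w
  downChain : ∀ u v w, le u w → le v w → le u v ∨ le v u
  peb : V → Fin k
  cover : ∀ ⦃u v⦄, G.Adj u v → le u v ∨ le v u
  pebbleCond : ∀ ⦃u v w⦄, G.Adj u v → le u v → le u w → le w v → u ≠ w → peb u ≠ peb w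
  heightLE : ∀ v, Set.ncard {u | le u v} ≤ q

def HasPFC {V : Type*} (G : SimpleGraph V) (k q : ℕ) : Prop :=
  Nonempty (PebbleForestCover G k q)

/-- The class `T^k_q` of graphs admitting a `k`-pebble forest cover of depth at most `q`. -/
def Tclass (k q : ℕ) : Set GraphB := {G | HasPFC G.2 k q}

/-! ## Forest covers, treedepth, tree decompositions, treewidth -/

/-- `G` has a forest cover of height at most `q`, i.e. treedepth at most `q`. -/
def HasForestCover {V : Type*} (G : SimpleGraph V) (q : ℕ) : Prop :=
  ∃ le : V → V → Prop,
    (∀ v, le v v) ∧ (∀ u v, le u v → le v u → u = v) ∧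
    (∀ u v w, le u v → le v w → le u w) ∧
    (∀ u v w, le u w → le v w → le u v ∨ le v u) ∧
    (∀ ⦃u v⦄, G.Adj u v → le u v ∨ le v u) ∧
    (∀ v, Set.ncard {u | le u v} ≤ q)

/-- The class `TD_q` of graphs of treedepth at most `q`. -/
def TDclass (q : ℕ) : Set GraphB := {G | HasForestCover G.2 q}

/-- A tree decomposition of `G`. -/
structure TreeDecomp {V : Type*} (G : SimpleGraph V) where
  n : ℕ
  T : SimpleGraph (Fin n)
  isTree : T.IsTree
  bag : Fin n → Set V
  coversVerts : ∀ v : V, ∃ t, v ∈ bag t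
  coversEdges : ∀ ⦃u v⦄, G.Adj u v → ∃ t, u ∈ bag t ∧ v ∈ bag t
  bagsConnected : ∀ v : V, (SimpleGraph.induce {t | v ∈ bag t} T).Connected

/-- The decomposition has width at most `w`. -/
def TreeDecomp.widthLE {V : Type*} {G : SimpleGraph V} (d : TreeDecomp G) (w : ℕ) : Prop :=
  ∀ t, (d.bag t).ncard ≤ w + 1

/-- `t` lies on the (unique) path from `r` to `s` in the tree `d.T`,
i.e. `t` is an ancestor of `s` when `d.T` is rooted at `r`. -/
def TreeDecomp.anc {V : Type*} {G : SimpleGraph V} (d : TreeDecomp G) (r t s : Fin d.n) : Prop :=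
  ∀ w : d.T.Walk r s, t ∈ w.support

/-- The decomposition has depth at most `q`: for some root `r`, for every node `s`,
the union of the bags of ancestors of `s` has at most `q` vertices. -/
def TreeDecomp.depthLE {V : Type*} {G : SimpleGraph V} (d : TreeDecomp G) (q : ℕ) : Prop :=
  ∃ r : Fin d.n, ∀ s : Fin d.n, (⋃ t ∈ {t | d.anc r t s}, d.bag t).ncard ≤ q

/-- The class `TW_w` of graphs of treewidth at most `w`. -/
def TWclass (w : ℕ) : Set GraphB := {G | ∃ d : TreeDecomp G.2, d.widthLE w}

/-! ## Minors and disjoint unions -/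

/-- `H` is a minor of `G`: there are pairwise disjoint connected nonempty branch sets in `G`,
one for each vertex of `H`, such that edges of `H` are realised between branch sets. -/
def IsMinor {W V : Type*} (H : SimpleGraph W) (G : SimpleGraph V) : Prop :=
  ∃ φ : V → Option W,
    (∀ w : W, (SimpleGraph.induce {v | φ v = some w} G).Connected) ∧
    (∀ ⦃w₁ w₂⦄, H.Adj w₁ w₂ → ∃ v₁ v₂, φ v₁ = some w₁ ∧ φ v₂ = some w₂ ∧ G.Adj v₁ v₂)

/-- The disjoint union of two simple graphs. -/
def sumGraph {V W : Type*} (G : SimpleGraph V) (H : SimpleGraph W) : SimpleGraph (V ⊕ W) where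
  Adj x y :=
    match x, y with
    | Sum.inl a, Sum.inl b => G.Adj a b
    | Sum.inr a, Sum.inr b => H.Adj a b
    | _, _ => False
  symm := by
    constructor
    rintro (a | a) (b | b) h
    · exact G.adj_symm h
    · exact h.elim
    · exact h.elim
    · exact H.adj_symm h
  loopless := by
    constructor
    rintro (a | a) h
    · exact G.irrefl h
    · exact H.irrefl h

/-! ## Cops-and-robber games -/

/-- A robber move from `v` to `u`: a walk in `G` none of whose vertices lies in `A`
(`A` will be `X ∩ Y` for old/new cop positions `X`, `Y` on `G` plus a `k`-clique). -/
def RobberMove {V : Type*} {k : ℕ} (G : SimpleGraph V) (A : Finset (V ⊕ Fin k)) (v u : V) :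
    Prop :=
  ∃ w : G.Walk v u, ∀ x ∈ w.support, Sum.inl x ∉ A

/-- The initial cop position: all `k` cops on the auxiliary clique. -/
def initPos (V : Type*) [DecidableEq V] (k : ℕ) : Finset (V ⊕ Fin k) :=
  Finset.univ.image Sum.inr

/-- In the (non-monotone) cops-and-robber game on `G` with `k` cops, from cop position `X`
and robber position `v`, Cops can catch the robber within `q` further rounds. -/
def CopsCatch {V : Type*} [DecidableEq V] (G : SimpleGraph V) (k : ℕ) :
    ℕ → Finset (V ⊕ Fin k) → V → Prop
  | 0, _, _ => False
  | q + 1, X, v =>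
      ∃ Y : Finset (V ⊕ Fin k), Y.card = k ∧ (X ∩ Y).card = k - 1 ∧
        ∀ u : V, RobberMove G (X ∩ Y) v u → (Sum.inl u ∈ Y ∨ CopsCatch G k q Y u)

/-- Monotone variant: Cops may only move so that the robber escape space does not grow. -/
def MonCopsCatch {V : Type*} [DecidableEq V] (G : SimpleGraph V) (k : ℕ) :
    ℕ → Finset (V ⊕ Fin k) → V → Prop
  | 0, _, _ => False
  | q + 1, X, v =>
      ∃ Y : Finset (V ⊕ Fin k), Y.card = k ∧ (X ∩ Y).card = k - 1 ∧
        (∀ u : V, RobberMove G (X ∩ Y) v u → RobberMove G X v u) ∧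
        ∀ u : V, RobberMove G (X ∩ Y) v u → (Sum.inl u ∈ Y ∨ MonCopsCatch G k q Y u)

/-- Robber can evade capture for `q` further rounds from cop position `X`, robber at `v`. -/
def RobberEsc {V : Type*} [DecidableEq V] (G : SimpleGraph V) (k : ℕ) :
    ℕ → Finset (V ⊕ Fin k) → V → Prop
  | 0, _, _ => True
  | q + 1, X, v =>
      ∀ Y : Finset (V ⊕ Fin k), Y.card = k → (X ∩ Y).card = k - 1 →
        ∃ u : V, RobberMove G (X ∩ Y) v u ∧ Sum.inl u ∉ Y ∧ RobberEsc G k q Y u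

/-- Cops has a winning strategy in the `q`-round `k`-cops-and-robber game on `G`. -/
def CopsWinGame {V : Type*} [DecidableEq V] (G : SimpleGraph V) (k q : ℕ) : Prop :=
  ∀ v : V, CopsCatch G k q (initPos V k) v

/-- Cops has a winning strategy in the monotone `q`-round `k`-cops-and-robber game on `G`. -/
def MonCopsWinGame {V : Type*} [DecidableEq V] (G : SimpleGraph V) (k q : ℕ) : Prop :=
  ∀ v : V, MonCopsCatch G k q (initPos V k) v

/-- Robber has a winning strategy in the `q`-round `k`-cops-and-robber game on `G`. -/
def RobberWinsGame {V : Type*} [DecidableEq V] (G : SimpleGraph V) (k q : ℕ) : Prop :=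
  ∃ v : V, RobberEsc G k q (initPos V k) v

/-- The `h × ℓ` grid graph. -/
def gridGraph (h l : ℕ) : SimpleGraph (Fin h × Fin l) :=
  (SimpleGraph.pathGraph h).boxProd (SimpleGraph.pathGraph l)

/-! ## The CFI-like construction `G_U` -/

/-- Vertices of `G_U`: pairs `(v, S)` with `S` a set of edges incident to `v` whose
parity matches `|{v} ∩ U|`. -/
def CFIvert {V : Type*} (G : SimpleGraph V) (U : Set V) : Type _ :=
  {p : V × Set (Sym2 V) // p.2 ⊆ G.incidenceSet p.1 ∧ (Even p.2.ncard ↔ p.1 ∉ U)}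

/-- The CFI-like graph `G_U` of Roberson. -/
def CFI {V : Type*} (G : SimpleGraph V) (U : Set V) : SimpleGraph (CFIvert G U) where
  Adj x y := G.Adj x.1.1 y.1.1 ∧ s(x.1.1, y.1.1) ∉ symmDiff x.1.2 y.1.2
  symm := by
    constructor
    rintro x y ⟨h1, h2⟩
    refine ⟨h1.symm, ?_⟩
    rw [Sym2.eq_swap, symmDiff_comm]
    exact h2
  loopless := by
    constructor
    rintro x ⟨h1, _⟩
    exact G.irrefl h1

/-! ## Counting first-order logic -/

/-- Formulae of first-order counting logic `C` with variables indexed by `α`. -/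
inductive CForm (α : Type) : Type
  | eq : α → α → CForm α
  | adj : α → α → CForm α
  | not : CForm α → CForm α
  | or : CForm α → CForm α → CForm α
  | and : CForm α → CForm α → CForm α
  | count : ℕ → α → CForm α → CForm α

namespace CForm

variable {α : Type} [DecidableEq α]

/-- Quantifier rank. -/
def qr : CForm α → ℕ
  | eq _ _ => 0
  | adj _ _ => 0
  | not φ => qr φ
  | or φ ψ => max (qr φ) (qr ψ)
  | and φ ψ => max (qr φ) (qr ψ)
  | count _ _ φ => qr φ + 1

/-- Free variables. -/
def freeVars : CForm α → Finset α
  | eq i j => {i, j}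
  | adj i j => {i, j}
  | not φ => freeVars φ
  | or φ ψ => freeVars φ ∪ freeVars ψ
  | and φ ψ => freeVars φ ∪ freeVars ψ
  | count _ i φ => (freeVars φ).erase i

/-- Satisfaction in a simple graph, relative to a partial variable assignment. -/
def Sat {V : Type*} (G : SimpleGraph V) : CForm α → (α → Option V) → Prop
  | eq i j, a => ∃ v, a i = some v ∧ a j = some v
  | adj i j, a => ∃ v w, a i = some v ∧ a j = some w ∧ G.Adj v w
  | not φ, a => ¬ Sat G φ a
  | or φ ψ, a => Sat G φ a ∨ Sat G ψ a
  | and φ ψ, a => Sat G φ a ∧ Sat G ψ a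
  | count t i φ, a =>
      ∃ s : Finset V, t ≤ s.card ∧ ∀ v ∈ s, Sat G φ (fun j => if j = i then some v else a j)

/-- Guarded formulae: every quantifier occurs as `∃^{≥t} y (E x y ∧ ψ)` with `x ≠ y`. -/
def Guarded : CForm α → Prop
  | count _ y (and (adj x y') χ) => y' = y ∧ x ≠ y ∧ Guarded χ
  | count _ _ _ => False
  | eq _ _ => True
  | adj _ _ => True
  | not φ => Guarded φ
  | or φ ψ => Guarded φ ∧ Guarded ψ
  | and φ ψ => Guarded φ ∧ Guarded ψ

end CForm

/-! ## Labelled graphs, products, construction trees -/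

/-- A `k`-labelled finite graph. -/
structure LGraph (k : ℕ) : Type 1 where
  V : Type
  fin : Finite V
  G : SimpleGraph V
  ν : Fin k → Option V

namespace LGraph

variable {k : ℕ}

/-- Number of homomorphisms between `k`-labelled graphs. -/
noncomputable def lhomCount (F G : LGraph k) : ℕ :=
  Set.ncard {f : F.V → G.V |
    (∀ ⦃u v⦄, F.G.Adj u v → G.G.Adj (f u) (f v)) ∧
    ∀ i v, F.ν i = some v → ∃ w, G.ν i = some w ∧ f v = w}

/-- Remove label `i`. -/
def removeLabel (A : LGraph k) (i : Fin k) : LGraph k :=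
  { A with ν := fun j => if j = i then none else A.ν j }

/-- Every vertex carries at least one label. -/
def FullyLabelled (A : LGraph k) : Prop := ∀ v : A.V, ∃ i, A.ν i = some v

/-- Adjacency on the disjoint sum of two labelled graphs. -/
def sumAdj (A B : LGraph k) : A.V ⊕ B.V → A.V ⊕ B.V → Prop
  | Sum.inl u, Sum.inl v => A.G.Adj u v
  | Sum.inr u, Sum.inr v => B.G.Adj u v
  | _, _ => False

lemma sumAdj_symm (A B : LGraph k) : ∀ x y, sumAdj A B x y → sumAdj A B y x := by
  rintro (u | u) (v | v) h
  · exact A.G.adj_symm h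
  · exact h.elim
  · exact h.elim
  · exact B.G.adj_symm h

/-- The gluing relation: vertices carrying the same label get identified. -/
def glue (A B : LGraph k) : A.V ⊕ B.V → A.V ⊕ B.V → Prop := fun x y =>
  ∃ i : Fin k, (A.ν i).map Sum.inl = some x ∧ (B.ν i).map Sum.inr = some y

/-- The product of two `k`-labelled graphs: disjoint union, identify equally labelled
vertices, suppress loops and parallel edges. -/
def product (A B : LGraph k) : LGraph k where
  V := Quot (glue A B)
  fin := by
    haveI := A.fin
    haveI := B.fin
    exact Finite.of_surjective (Quot.mk _) (fun x => Quot.inductionOn x fun a => ⟨a, rfl⟩)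
  G :=
    { Adj := fun x y =>
        x ≠ y ∧ ∃ u v, Quot.mk _ u = x ∧ Quot.mk _ v = y ∧ sumAdj A B u v
      symm := by
        constructor
        rintro x y ⟨hne, u, v, hu, hv, h⟩
        exact ⟨hne.symm, v, u, hv, hu, sumAdj_symm A B u v h⟩
      loopless := ⟨fun x h => h.1 rfl⟩ }
  ν := fun i =>
    ((A.ν i).map fun v => Quot.mk _ (Sum.inl v)).orElse
      fun _ => (B.ν i).map fun v => Quot.mk _ (Sum.inr v)

/-- Isomorphism of labelled graphs. -/
def LIso (A B : LGraph k) : Prop :=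
  ∃ e : A.G ≃g B.G, ∀ i, (A.ν i).map (fun v => e v) = B.ν i

end LGraph

/-- `k`-construction trees: leaves carry (fully labelled) graphs, unary nodes remove
one label, binary nodes take products. -/
inductive CT (k : ℕ) : Type 1
  | leaf : LGraph k → CT k
  | elim : Fin k → CT k → CT k
  | prod : CT k → CT k → CT k

namespace CT

variable {k : ℕ}

/-- The labelled graph constructed by a construction tree. -/
def graphOf : CT k → LGraph k
  | leaf A => A
  | elim i t => (graphOf t).removeLabel i
  | prod t₁ t₂ => (graphOf t₁).product (graphOf t₂)

/-- Validity: leaves are fully labelled and elimination nodes remove an assigned label. -/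
def Valid : CT k → Prop
  | leaf A => A.FullyLabelled
  | elim i t => Valid t ∧ (graphOf t).ν i ≠ none
  | prod t₁ t₂ => Valid t₁ ∧ Valid t₂

/-- Guarded validity: labels may only be removed from vertices with a labelled neighbour. -/
def GuardedValid : CT k → Prop
  | leaf A => A.FullyLabelled
  | elim i t => GuardedValid t ∧
      ∃ v, (graphOf t).ν i = some v ∧
        ∃ j w, (graphOf t).ν j = some w ∧ (graphOf t).G.Adj v w
  | prod t₁ t₂ => GuardedValid t₁ ∧ GuardedValid t₂

/-- The elimination depth: maximal number of elimination nodes on a root-to-leaf path. -/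
def elimDepth : CT k → ℕ
  | leaf _ => 0
  | elim _ t => elimDepth t + 1
  | prod t₁ t₂ => max (elimDepth t₁) (elimDepth t₂)

end CT

/-- The class `L^k_q` of `k`-labelled graphs admitting a `k`-construction tree of
elimination depth at most `q`. -/
def Lclass (k q : ℕ) : Set (LGraph k) :=
  {F | ∃ t : CT k, CT.Valid t ∧ CT.elimDepth t ≤ q ∧ LGraph.LIso (CT.graphOf t) F}

/-- The class `GL^k_q`: as `L^k_q`, but labels may only be removed from vertices with a
labelled neighbour. -/
def GLclass (k q : ℕ) : Set (LGraph k) :=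
  {F | ∃ t : CT k, CT.GuardedValid t ∧ CT.elimDepth t ≤ q ∧ LGraph.LIso (CT.graphOf t) F}

/-- The class `GE^k_q` of unlabelled graphs underlying graphs in `GL^k_q`. -/
def GEclass (k q : ℕ) : Set GraphB :=
  {G | ∃ F ∈ GLclass k q, Nonempty (F.G ≃g G.2)}

/-! ## The bijective pebble game -/

/-- `γ` is a partial isomorphism between `G` and `H`. -/
def PartialIso {V W : Type*} (G : SimpleGraph V) (H : SimpleGraph W) {k : ℕ}
    (γ : Fin k → Option (V × W)) : Prop :=
  ∀ i j vi wi vj wj, γ i = some (vi, wi) → γ j = some (vj, wj) →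
    ((vi = vj ↔ wi = wj) ∧ (G.Adj vi vj ↔ H.Adj wi wj))

/-- Duplicator wins the `q`-round bijective `k`-pebble game on `G` and `H` from position `γ`. -/
def DupWins {V W : Type*} (G : SimpleGraph V) (H : SimpleGraph W) (k : ℕ) :
    ℕ → (Fin k → Option (V × W)) → Prop
  | 0, γ => PartialIso G H γ
  | q + 1, γ => PartialIso G H γ ∧
      ∀ p : Fin k, ∃ f : V ≃ W, ∀ v : V,
        DupWins G H k q (fun j => if j = p then some (v, f v) else γ j)

namespace QGAux

open LGraph

variable {k : ℕ}

def homSet (F G : LGraph k) : Set (F.V → G.V) :=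
  {f | (∀ ⦃u v⦄, F.G.Adj u v → G.G.Adj (f u) (f v)) ∧
    ∀ i v, F.ν i = some v → ∃ w, G.ν i = some w ∧ f v = w}

lemma lhomCount_eq (F G : LGraph k) : lhomCount F G = (homSet F G).ncard := rfl

lemma elim_eq_of_eqvGen {A B G : LGraph k} {g : A.V → G.V} {h : B.V → G.V}
    (hg : g ∈ homSet A G) (hh : h ∈ homSet B G) {x y}
    (hxy : Relation.EqvGen (glue A B) x y) : Sum.elim g h x = Sum.elim g h y := by
  induction hxy with
  | rel x y hr =>
      obtain ⟨i, hx, hy⟩ := hr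
      obtain ⟨u, hu, rfl⟩ := Option.map_eq_some_iff.mp hx
      obtain ⟨v, hv, rfl⟩ := Option.map_eq_some_iff.mp hy
      obtain ⟨w, hw, hgw⟩ := hg.2 i u hu
      obtain ⟨w', hw', hhw⟩ := hh.2 i v hv
      rw [hw] at hw'
      simp only [Sum.elim_inl, Sum.elim_inr, hgw, hhw]
      exact Option.some_injective _ hw'
  | refl x => rfl
  | symm x y _ ih => exact ih.symm
  | trans x y z _ _ ih₁ ih₂ => exact ih₁.trans ih₂

def LoopFree (A B : LGraph k) : Prop :=
  ∀ x y, sumAdj A B x y → ¬ Relation.EqvGen (glue A B) x y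

lemma mul_eq_zero_of_not_loopFree (A B G : LGraph k) (h : ¬ LoopFree A B) :
    lhomCount A G * lhomCount B G = 0 := by
  rw [lhomCount_eq, lhomCount_eq, Nat.mul_eq_zero]
  by_contra hc
  push_neg at hc
  obtain ⟨g, hg⟩ := Set.nonempty_of_ncard_ne_zero hc.1
  obtain ⟨h', hh⟩ := Set.nonempty_of_ncard_ne_zero hc.2
  unfold LoopFree at h
  push_neg at h
  obtain ⟨x, y, hadj, heqv⟩ := h
  have hE := elim_eq_of_eqvGen hg hh heqv
  rcases x with u | u <;> rcases y with v | v
  · have := hg.1 hadj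
    simp only [Sum.elim_inl] at hE
    rw [hE] at this
    exact G.G.irrefl this
  · exact hadj
  · exact hadj
  · have := hh.1 hadj
    simp only [Sum.elim_inr] at hE
    rw [hE] at this
    exact G.G.irrefl this

lemma prod_lhomCount (A B G : LGraph k) (hLF : LoopFree A B) :
    lhomCount (A.product B) G = lhomCount A G * lhomCount B G := by
  rw [lhomCount_eq, lhomCount_eq, lhomCount_eq]
  rw [← Nat.card_coe_set_eq, ← Nat.card_coe_set_eq, ← Nat.card_coe_set_eq,
    ← Nat.card_prod]
  refine Nat.card_congr ?_
  refine
    { toFun := fun f =>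
        (⟨fun u => f.1 (Quot.mk _ (Sum.inl u)), ?_, ?_⟩,
         ⟨fun v => f.1 (Quot.mk _ (Sum.inr v)), ?_, ?_⟩)
      invFun := fun gh =>
        ⟨Quot.lift (Sum.elim gh.1.1 gh.2.1)
          (fun x y hxy => elim_eq_of_eqvGen gh.1.2 gh.2.2 (Relation.EqvGen.rel _ _ hxy)), ?_, ?_⟩
      left_inv := ?_
      right_inv := ?_ }
  · -- A adjacency
    intro u v hadj
    exact f.2.1 ⟨fun hEq => hLF _ _ (show sumAdj A B (Sum.inl u) (Sum.inl v) from hadj)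
      (Quot.eq.mp hEq), Sum.inl u, Sum.inl v, rfl, rfl, hadj⟩
  · -- A labels
    intro i u hu
    refine f.2.2 i (Quot.mk _ (Sum.inl u)) ?_
    show (((A.ν i).map fun v => Quot.mk _ (Sum.inl v)).orElse
      fun _ => (B.ν i).map fun v => Quot.mk _ (Sum.inr v)) = _
    rw [hu]
    rfl
  · -- B adjacency
    intro u v hadj
    exact f.2.1 ⟨fun hEq => hLF _ _ (show sumAdj A B (Sum.inr u) (Sum.inr v) from hadj)
      (Quot.eq.mp hEq), Sum.inr u, Sum.inr v, rfl, rfl, hadj⟩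
  · -- B labels
    intro i v hv
    rcases hA : A.ν i with _ | u'
    · refine f.2.2 i (Quot.mk _ (Sum.inr v)) ?_
      show (((A.ν i).map fun v => Quot.mk _ (Sum.inl v)).orElse
        fun _ => (B.ν i).map fun v => Quot.mk _ (Sum.inr v)) = _
      rw [hA, hv]
      rfl
    · obtain ⟨w, hw, hfw⟩ := f.2.2 i (Quot.mk _ (Sum.inl u'))
        (show (((A.ν i).map fun v => Quot.mk _ (Sum.inl v)).orElse
          fun _ => (B.ν i).map fun v => Quot.mk _ (Sum.inr v)) = _ by rw [hA]; rfl)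
      refine ⟨w, hw, ?_⟩
      have heq : Quot.mk (glue A B) (Sum.inr v) = Quot.mk (glue A B) (Sum.inl u') :=
        (Quot.sound ⟨i, by rw [hA]; rfl, by rw [hv]; rfl⟩).symm
      show f.1 (Quot.mk (glue A B) (Sum.inr v)) = w
      rw [heq, hfw]
  · -- product adjacency for invFun
    rintro x y ⟨hne, u, v, hu, hv, hadj⟩
    subst hu; subst hv
    rcases u with u | u <;> rcases v with v | v
    · exact gh.1.2.1 hadj
    · exact hadj.elim
    · exact hadj.elim
    · exact gh.2.2.1 hadj
  · -- product labels for invFun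
    intro i x hx
    rcases hA : A.ν i with _ | u'
    · rcases hB : B.ν i with _ | v'
      · exfalso
        have : ((A.product B).ν i) = none := by
          show (((A.ν i).map fun v => Quot.mk _ (Sum.inl v)).orElse
            fun _ => (B.ν i).map fun v => Quot.mk _ (Sum.inr v)) = none
          rw [hA, hB]; rfl
        rw [this] at hx; exact (nomatch hx)
      · have hx' : x = Quot.mk (glue A B) (Sum.inr v') := by
          have : ((A.product B).ν i) = some (Quot.mk (glue A B) (Sum.inr v')) := by
            show (((A.ν i).map fun v => Quot.mk _ (Sum.inl v)).orElse
              fun _ => (B.ν i).map fun v => Quot.mk _ (Sum.inr v)) = _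
            rw [hA, hB]; rfl
          rw [this] at hx; exact (Option.some_injective _ hx).symm
        subst hx'
        obtain ⟨w, hw, hfw⟩ := gh.2.2.2 i v' hB
        exact ⟨w, hw, hfw⟩
    · have hx' : x = Quot.mk (glue A B) (Sum.inl u') := by
        have : ((A.product B).ν i) = some (Quot.mk (glue A B) (Sum.inl u')) := by
          show (((A.ν i).map fun v => Quot.mk _ (Sum.inl v)).orElse
            fun _ => (B.ν i).map fun v => Quot.mk _ (Sum.inr v)) = _
          rw [hA]; rfl
        rw [this] at hx; exact (Option.some_injective _ hx).symm
      subst hx'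
      obtain ⟨w, hw, hfw⟩ := gh.1.2.2 i u' hA
      exact ⟨w, hw, hfw⟩
  · -- left_inv
    intro f
    apply Subtype.ext
    funext x
    induction x using Quot.ind with
    | _ u => rcases u with u | u <;> rfl
  · -- right_inv
    intro gh
    refine Prod.ext ?_ ?_
    · apply Subtype.ext; funext u; rfl
    · apply Subtype.ext; funext v; rfl

end QGAux
namespace QGAux

open LGraph

variable {k : ℕ}

/-- Relabel `G` so that label `i` sits on `v`. -/
def setL (G : LGraph k) (i : Fin k) (v : G.V) : LGraph k :=
  { G with ν := fun j => if j = i then some v else G.ν j }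

lemma homSet_setL_of_none {A : LGraph k} (G : LGraph k) (i : Fin k) (v : G.V)
    (hA : A.ν i = none) : homSet A (setL G i v) = homSet A G := by
  ext f
  constructor <;> rintro ⟨h1, h2⟩ <;> refine ⟨h1, fun j u hj => ?_⟩ <;>
    obtain ⟨w, hw, hfw⟩ := h2 j u hj <;> rcases eq_or_ne j i with rfl | hne
  · rw [hA] at hj; exact (nomatch hj)
  · refine ⟨w, ?_, hfw⟩
    rwa [show (setL G i v).ν j = G.ν j from if_neg hne] at hw
  · rw [hA] at hj; exact (nomatch hj)
  · exact ⟨w, by rw [show (setL G i v).ν j = G.ν j from if_neg hne]; exact hw, hfw⟩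

lemma mem_homSet_setL {A G : LGraph k} {i : Fin k} {u₀ : A.V} (hA : A.ν i = some u₀)
    {f : A.V → G.V} (hf : f ∈ homSet (A.removeLabel i) G) :
    f ∈ homSet A (setL G i (f u₀)) := by
  refine ⟨hf.1, fun j w hj => ?_⟩
  rcases eq_or_ne j i with rfl | hne
  · rw [hA] at hj
    exact ⟨f u₀, if_pos rfl, by rw [Option.some_injective _ hj]⟩
  · obtain ⟨w', hw', hfw⟩ := hf.2 j w
      (by show (if j = i then none else A.ν j) = some w; rwa [if_neg hne])
    exact ⟨w', by rw [show (setL G i (f u₀)).ν j = G.ν j from if_neg hne]; exact hw', hfw⟩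

lemma mem_homSet_of_setL {A G : LGraph k} {i : Fin k} {v : G.V}
    {f : A.V → G.V} (hf : f ∈ homSet A (setL G i v)) :
    f ∈ homSet (A.removeLabel i) G := by
  refine ⟨hf.1, fun j w hj => ?_⟩
  have hne : j ≠ i := by
    intro h
    rw [h] at hj
    have hnone : (A.removeLabel i).ν i = none := by
      show (if i = i then none else A.ν i) = none
      rw [if_pos rfl]
    rw [hnone] at hj
    exact (nomatch hj)
  have hj' : A.ν j = some w := by
    rwa [show (A.removeLabel i).ν j = A.ν j from if_neg hne] at hj
  obtain ⟨w', hw', hfw⟩ := hf.2 j w hj'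
  exact ⟨w', by rwa [show (setL G i v).ν j = G.ν j from if_neg hne] at hw', hfw⟩

lemma fst_of_setL {A G : LGraph k} {i : Fin k} {u₀ : A.V} (hA : A.ν i = some u₀)
    {v : G.V} {f : A.V → G.V} (hf : f ∈ homSet A (setL G i v)) : f u₀ = v := by
  obtain ⟨w, hw, hfw⟩ := hf.2 i u₀ hA
  have : some v = some w := by rw [← hw]; exact (if_pos rfl).symm
  rw [hfw, ← Option.some_injective _ this]

lemma removeLabel_lhomCount (A G : LGraph k) (i : Fin k) {u₀ : A.V}
    (hA : A.ν i = some u₀) [Fintype G.V] :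
    lhomCount (A.removeLabel i) G = ∑ v : G.V, lhomCount A (setL G i v) := by
  haveI := A.fin
  have e : {f : A.V → G.V // f ∈ homSet (A.removeLabel i) G} ≃
      Σ v : G.V, {f : A.V → G.V // f ∈ homSet A (setL G i v)} :=
    { toFun := fun f => ⟨f.1 u₀, f.1, mem_homSet_setL hA f.2⟩
      invFun := fun s => ⟨s.2.1, mem_homSet_of_setL s.2.2⟩
      left_inv := fun f => rfl
      right_inv := fun s => Sigma.subtype_ext (fst_of_setL (G := G) hA s.2.2) rfl }
  haveI : ∀ v : G.V, Fintype {f : A.V → G.V // f ∈ homSet A (setL G i v)} :=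
    fun v => Fintype.ofFinite _
  haveI : Fintype {f : A.V → G.V // f ∈ homSet (A.removeLabel i) G} := Fintype.ofFinite _
  have h1 : lhomCount (A.removeLabel i) G =
      Nat.card {f : A.V → G.V // f ∈ homSet (A.removeLabel i) G} := by
    rw [lhomCount_eq, ← Nat.card_coe_set_eq]
    rfl
  have h2 : ∀ v : G.V, lhomCount A (setL G i v) =
      Nat.card {f : A.V → G.V // f ∈ homSet A (setL G i v)} := by
    intro v
    rw [lhomCount_eq, ← Nat.card_coe_set_eq]
    rfl
  rw [h1, Nat.card_congr e, Nat.card_eq_fintype_card, Fintype.card_sigma]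
  refine Finset.sum_congr rfl fun v _ => ?_
  rw [h2 v, Nat.card_eq_fintype_card]

end QGAux
namespace QGAux

open LGraph

variable {k : ℕ}

def emptyLG (k : ℕ) : LGraph k :=
  { V := Empty, fin := inferInstance, G := ⊥, ν := fun _ => none }

lemma lhomCount_emptyLG (G : LGraph k) : lhomCount (emptyLG k) G = 1 := by
  rw [lhomCount_eq]
  have : homSet (emptyLG k) G = Set.univ := by
    ext f
    simp only [Set.mem_univ, iff_true]
    exact ⟨fun u v h => u.elim, fun i v h => by cases h⟩
  rw [this, Set.ncard_univ]
  haveI : IsEmpty (emptyLG k).V := ⟨fun x => x.elim⟩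
  exact Nat.card_unique

def eqLG (i j : Fin k) : LGraph k :=
  { V := PUnit, fin := inferInstance, G := ⊥,
    ν := fun m => if m = i ∨ m = j then some PUnit.unit else none }

lemma lhomCount_eqLG_of_eq (i j : Fin k) (G : LGraph k) {a b : G.V}
    (ha : G.ν i = some a) (hb : G.ν j = some b) (hab : a = b) :
    lhomCount (eqLG i j) G = 1 := by
  subst hab
  rw [lhomCount_eq]
  have : homSet (eqLG i j) G = {fun _ => a} := by
    ext f
    constructor
    · rintro ⟨h1, h2⟩
      obtain ⟨w, hw, hfw⟩ := h2 i PUnit.unit (if_pos (Or.inl rfl))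
      rw [ha] at hw
      have : f PUnit.unit = a := by rw [hfw, Option.some_injective _ hw]
      funext u
      cases u
      exact this
    · rintro rfl
      refine ⟨fun u v h => (SimpleGraph.bot_adj u v).mp h |>.elim, fun m v hm => ?_⟩
      by_cases hm' : m = i ∨ m = j
      · rcases hm' with rfl | rfl
        · exact ⟨a, ha, rfl⟩
        · exact ⟨a, hb, rfl⟩
      · rw [show (eqLG i j).ν m = none from if_neg hm'] at hm
        exact (nomatch hm)
  rw [this, Set.ncard_singleton]

lemma lhomCount_eqLG_of_ne (i j : Fin k) (G : LGraph k) {a b : G.V}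
    (ha : G.ν i = some a) (hb : G.ν j = some b) (hab : a ≠ b) :
    lhomCount (eqLG i j) G = 0 := by
  rw [lhomCount_eq]
  have : homSet (eqLG i j) G = ∅ := by
    ext f
    simp only [Set.mem_empty_iff_false, iff_false]
    rintro ⟨h1, h2⟩
    obtain ⟨w, hw, hfw⟩ := h2 i PUnit.unit (if_pos (Or.inl rfl))
    obtain ⟨w', hw', hfw'⟩ := h2 j PUnit.unit (if_pos (Or.inr rfl))
    rw [ha] at hw; rw [hb] at hw'
    apply hab
    rw [Option.some_injective _ hw, Option.some_injective _ hw', ← hfw, ← hfw']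
  rw [this, Set.ncard_empty]

def adjLG (i j : Fin k) : LGraph k :=
  { V := Bool, fin := inferInstance, G := ⊤,
    ν := fun m => if m = i then some false else if m = j then some true else none }

lemma lhomCount_adjLG_of_adj (i j : Fin k) (hij : i ≠ j) (G : LGraph k) {a b : G.V}
    (ha : G.ν i = some a) (hb : G.ν j = some b) (hadj : G.G.Adj a b) :
    lhomCount (adjLG i j) G = 1 := by
  rw [lhomCount_eq]
  have : homSet (adjLG i j) G = {fun x => cond x b a} := by
    ext f
    constructor
    · rintro ⟨h1, h2⟩
      obtain ⟨w, hw, hfw⟩ := h2 i false (if_pos rfl)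
      obtain ⟨w', hw', hfw'⟩ := h2 j true (by
        show (if j = i then some false else if j = j then some true else none) = some true
        rw [if_neg (Ne.symm hij), if_pos rfl])
      rw [ha] at hw; rw [hb] at hw'
      funext x
      cases x
      · show f false = cond false b a
        rw [hfw, Option.some_injective _ hw]
        rfl
      · show f true = cond true b a
        rw [hfw', Option.some_injective _ hw']
        rfl
    · rintro rfl
      constructor
      · intro u v huv
        have hne : u ≠ v := (SimpleGraph.top_adj u v).mp huv
        rcases u with _ | _ <;> rcases v with _ | _
        · exact absurd rfl hne
        · exact hadj
        · exact hadj.symm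
        · exact absurd rfl hne
      · intro m v hm
        by_cases hmi : m = i
        · rw [show (adjLG i j).ν m = some false from by
            show (if m = i then some false else _) = some false; rw [if_pos hmi]] at hm
          rw [hmi]
          exact ⟨a, ha, by rw [← Option.some_injective _ hm]; rfl⟩
        · by_cases hmj : m = j
          · rw [show (adjLG i j).ν m = some true from by
              show (if m = i then some false else if m = j then some true else none) = some true
              rw [if_neg hmi, if_pos hmj]] at hm
            rw [hmj]
            exact ⟨b, hb, by rw [← Option.some_injective _ hm]; rfl⟩
          · rw [show (adjLG i j).ν m = none from by
              show (if m = i then some false else if m = j then some true else none) = none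
              rw [if_neg hmi, if_neg hmj]] at hm
            exact (nomatch hm)
  rw [this]; exact Set.ncard_singleton _

lemma lhomCount_adjLG_of_nadj (i j : Fin k) (hij : i ≠ j) (G : LGraph k) {a b : G.V}
    (ha : G.ν i = some a) (hb : G.ν j = some b) (hadj : ¬ G.G.Adj a b) :
    lhomCount (adjLG i j) G = 0 := by
  rw [lhomCount_eq]
  have : homSet (adjLG i j) G = ∅ := by
    ext f
    simp only [Set.mem_empty_iff_false, iff_false]
    rintro ⟨h1, h2⟩
    obtain ⟨w, hw, hfw⟩ := h2 i false (if_pos rfl)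
    obtain ⟨w', hw', hfw'⟩ := h2 j true (by
      show (if j = i then some false else if j = j then some true else none) = some true
      rw [if_neg (Ne.symm hij), if_pos rfl])
    rw [ha] at hw; rw [hb] at hw'
    have hfa : f false = a := by rw [hfw, Option.some_injective _ hw]
    have hfb : f true = b := by rw [hfw', Option.some_injective _ hw']
    have : G.G.Adj (f false) (f true) := h1 (show (⊤ : SimpleGraph Bool).Adj false true from by simp)
    rw [hfa, hfb] at this
    exact hadj this
  rw [this, Set.ncard_empty]

end QGAux
namespace QGAux

open LGraph

variable {k : ℕ}

attribute [local instance] Classical.propDecidable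

noncomputable def Seval (l : List (ℝ × LGraph k)) (G : LGraph k) : ℝ :=
  (l.map fun p => p.1 * (lhomCount p.2 G : ℝ)).sum

lemma Seval_nil (G : LGraph k) : Seval ([] : List (ℝ × LGraph k)) G = 0 := rfl

lemma Seval_cons (p : ℝ × LGraph k) (l : List (ℝ × LGraph k)) (G : LGraph k) :
    Seval (p :: l) G = p.1 * (lhomCount p.2 G : ℝ) + Seval l G := by
  simp [Seval]

lemma Seval_append (l₁ l₂ : List (ℝ × LGraph k)) (G : LGraph k) :
    Seval (l₁ ++ l₂) G = Seval l₁ G + Seval l₂ G := by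
  simp [Seval]

def scaleCombo (c : ℝ) (l : List (ℝ × LGraph k)) : List (ℝ × LGraph k) :=
  l.map fun p => (c * p.1, p.2)

lemma Seval_scale (c : ℝ) (l : List (ℝ × LGraph k)) (G : LGraph k) :
    Seval (scaleCombo c l) G = c * Seval l G := by
  induction l with
  | nil => simp [Seval, scaleCombo]
  | cons p l ih =>
      rw [show scaleCombo c (p :: l) = (c * p.1, p.2) :: scaleCombo c l from rfl,
        Seval_cons, Seval_cons, ih]
      ring

noncomputable def mulCombo (l₁ l₂ : List (ℝ × LGraph k)) : List (ℝ × LGraph k) :=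
  l₁.flatMap fun p => l₂.map fun q =>
    if LoopFree p.2 q.2 then (p.1 * q.1, p.2.product q.2) else (0, emptyLG k)

lemma Seval_mulCombo (l₁ l₂ : List (ℝ × LGraph k)) (G : LGraph k) :
    Seval (mulCombo l₁ l₂) G = Seval l₁ G * Seval l₂ G := by
  induction l₁ with
  | nil => simp [Seval, mulCombo]
  | cons p l₁ ih =>
      rw [show mulCombo (p :: l₁) l₂ =
        (l₂.map fun q => if LoopFree p.2 q.2 then (p.1 * q.1, p.2.product q.2)
          else (0, emptyLG k)) ++ mulCombo l₁ l₂ from rfl]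
      rw [Seval_append, ih, Seval_cons]
      have hinner : ∀ m : List (ℝ × LGraph k),
          Seval (m.map fun q => if LoopFree p.2 q.2 then (p.1 * q.1, p.2.product q.2)
            else (0, emptyLG k)) G = p.1 * (lhomCount p.2 G : ℝ) * Seval m G := by
        intro m
        induction m with
        | nil => simp [Seval]
        | cons q m ihm =>
            rw [show (List.map (fun q => if LoopFree p.2 q.2 then
                (p.1 * q.1, p.2.product q.2) else (0, emptyLG k)) (q :: m)) =
              (if LoopFree p.2 q.2 then (p.1 * q.1, p.2.product q.2) else (0, emptyLG k)) ::
                (m.map fun q => if LoopFree p.2 q.2 then (p.1 * q.1, p.2.product q.2)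
                  else (0, emptyLG k)) from rfl, Seval_cons, ihm, Seval_cons]
            by_cases hLF : LoopFree p.2 q.2
            · rw [if_pos hLF]
              have := prod_lhomCount p.2 q.2 G hLF
              show (p.1 * q.1) * ((lhomCount (p.2.product q.2) G : ℕ) : ℝ) + _ = _
              rw [this]
              push_cast
              ring
            · rw [if_neg hLF]
              have h0 : (lhomCount p.2 G : ℝ) * (lhomCount q.2 G : ℝ) = 0 := by
                have := mul_eq_zero_of_not_loopFree p.2 q.2 G hLF
                exact_mod_cast congrArg (Nat.cast : ℕ → ℝ) this
              show (0 : ℝ) * _ + _ = _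
              rw [zero_mul, zero_add, mul_add,
                show p.1 * (lhomCount p.2 G : ℝ) * (q.1 * (lhomCount q.2 G : ℝ))
                  = p.1 * q.1 * ((lhomCount p.2 G : ℝ) * (lhomCount q.2 G : ℝ)) from by ring,
                h0, mul_zero, zero_add]
      rw [hinner l₂]
      ring

noncomputable def powCombo (l : List (ℝ × LGraph k)) : ℕ → List (ℝ × LGraph k)
  | 0 => [(1, emptyLG k)]
  | d + 1 => mulCombo l (powCombo l d)

lemma Seval_powCombo (l : List (ℝ × LGraph k)) (d : ℕ) (G : LGraph k) :
    Seval (powCombo l d) G = (Seval l G) ^ d := by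
  induction d with
  | zero => simp [powCombo, Seval, lhomCount_emptyLG]
  | succ d ih => rw [powCombo, Seval_mulCombo, ih, pow_succ]; ring

noncomputable def elimCombo (n : ℕ) (i : Fin k) (l : List (ℝ × LGraph k)) :
    List (ℝ × LGraph k) :=
  l.map fun p => if (p.2.ν i).isSome then (p.1, p.2.removeLabel i) else (p.1 * n, p.2)

lemma Seval_elimCombo (i : Fin k) (l : List (ℝ × LGraph k)) (G : LGraph k) [Fintype G.V] :
    Seval (elimCombo (Fintype.card G.V) i l) G = ∑ v : G.V, Seval l (setL G i v) := by
  induction l with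
  | nil => simp [Seval, elimCombo]
  | cons p l ih =>
      rw [show elimCombo (Fintype.card G.V) i (p :: l) =
        (if (p.2.ν i).isSome then (p.1, p.2.removeLabel i)
          else (p.1 * (Fintype.card G.V : ℕ), p.2)) :: elimCombo (Fintype.card G.V) i l
          from rfl, Seval_cons, ih]
      have : ∀ v : G.V, Seval (p :: l) (setL G i v) =
          p.1 * (lhomCount p.2 (setL G i v) : ℝ) + Seval l (setL G i v) :=
        fun v => Seval_cons p l (setL G i v)
      rw [Finset.sum_congr rfl fun v _ => this v, Finset.sum_add_distrib]
      congr 1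
      rcases hp : p.2.ν i with _ | u₀
      · rw [if_neg (by simp)]
        have hconst : ∀ v : G.V, lhomCount p.2 (setL G i v) = lhomCount p.2 G := by
          intro v
          rw [lhomCount_eq, lhomCount_eq, homSet_setL_of_none G i v hp]; rfl
        rw [Finset.sum_congr rfl fun v _ => by rw [hconst v]]
        rw [Finset.sum_const, Finset.card_univ, nsmul_eq_mul]
        show p.1 * ((Fintype.card G.V : ℕ) : ℝ) * (lhomCount p.2 G : ℝ) = _
        ring
      · rw [if_pos (by rfl)]
        show p.1 * ((lhomCount (p.2.removeLabel i) G : ℕ) : ℝ) = _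
        rw [removeLabel_lhomCount p.2 G i hp]
        push_cast
        rw [Finset.mul_sum]

end QGAux
namespace QGAux

open LGraph

variable {k : ℕ}

def GoodG (q' : ℕ) (A : LGraph k) : Prop :=
  ∃ t : CT k, CT.Valid t ∧ CT.elimDepth t ≤ q' ∧ CT.graphOf t = A

def GoodL (q' : ℕ) (l : List (ℝ × LGraph k)) : Prop :=
  ∀ p ∈ l, GoodG q' p.2

lemma GoodG.mono {q' q'' : ℕ} (h : q' ≤ q'') {A : LGraph k} (hA : GoodG q' A) :
    GoodG q'' A := by
  obtain ⟨t, h1, h2, h3⟩ := hA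
  exact ⟨t, h1, le_trans h2 h, h3⟩

lemma GoodL.mono {q' q'' : ℕ} (h : q' ≤ q'') {l : List (ℝ × LGraph k)} (hl : GoodL q' l) :
    GoodL q'' l := fun p hp => (hl p hp).mono h

lemma goodG_emptyLG (q' : ℕ) : GoodG q' (emptyLG k) :=
  ⟨CT.leaf (emptyLG k), fun v => v.elim, Nat.zero_le _, rfl⟩

lemma goodG_eqLG (q' : ℕ) (i j : Fin k) : GoodG q' (eqLG i j) :=
  ⟨CT.leaf (eqLG i j), fun v => ⟨i, by cases v; exact if_pos (Or.inl rfl)⟩, Nat.zero_le _, rfl⟩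

lemma goodG_adjLG (q' : ℕ) (i j : Fin k) (hij : i ≠ j) : GoodG q' (adjLG i j) := by
  refine ⟨CT.leaf (adjLG i j), fun v => ?_, Nat.zero_le _, rfl⟩
  rcases v with _ | _
  · exact ⟨i, if_pos rfl⟩
  · refine ⟨j, ?_⟩
    show (if j = i then some false else if j = j then some true else none) = some true
    rw [if_neg (Ne.symm hij), if_pos rfl]

lemma GoodL_nil (q' : ℕ) : GoodL q' ([] : List (ℝ × LGraph k)) := fun p hp => absurd hp
  List.not_mem_nil

lemma GoodL_append {q' : ℕ} {l₁ l₂ : List (ℝ × LGraph k)} (h₁ : GoodL q' l₁)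
    (h₂ : GoodL q' l₂) : GoodL q' (l₁ ++ l₂) := by
  intro p hp
  rcases List.mem_append.mp hp with h | h
  · exact h₁ p h
  · exact h₂ p h

lemma GoodL_cons {q' : ℕ} {p : ℝ × LGraph k} {l : List (ℝ × LGraph k)} (hp : GoodG q' p.2)
    (hl : GoodL q' l) : GoodL q' (p :: l) := by
  intro r hr
  rcases List.mem_cons.mp hr with rfl | h
  · exact hp
  · exact hl r h

lemma GoodL_scale {q' : ℕ} (c : ℝ) {l : List (ℝ × LGraph k)} (hl : GoodL q' l) :
    GoodL q' (scaleCombo c l) := by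
  intro p hp
  obtain ⟨r, hr, rfl⟩ := List.mem_map.mp hp
  exact hl r hr

lemma GoodL_mulCombo {q' : ℕ} {l₁ l₂ : List (ℝ × LGraph k)} (h₁ : GoodL q' l₁)
    (h₂ : GoodL q' l₂) : GoodL q' (mulCombo l₁ l₂) := by
  intro p hp
  obtain ⟨a, ha, hmem⟩ := List.mem_flatMap.mp hp
  obtain ⟨b, hb, rfl⟩ := List.mem_map.mp hmem
  by_cases hLF : LoopFree a.2 b.2
  · rw [if_pos hLF]
    obtain ⟨t₁, v₁, d₁, g₁⟩ := h₁ a ha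
    obtain ⟨t₂, v₂, d₂, g₂⟩ := h₂ b hb
    refine ⟨CT.prod t₁ t₂, ⟨v₁, v₂⟩, max_le d₁ d₂, ?_⟩
    show (CT.graphOf t₁).product (CT.graphOf t₂) = _
    rw [g₁, g₂]
  · rw [if_neg hLF]
    exact goodG_emptyLG q'

lemma GoodL_powCombo {q' : ℕ} {l : List (ℝ × LGraph k)} (hl : GoodL q' l) (d : ℕ) :
    GoodL q' (powCombo l d) := by
  induction d with
  | zero => exact GoodL_cons (goodG_emptyLG q') (GoodL_nil q')
  | succ d ih => exact GoodL_mulCombo hl ih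

lemma GoodL_elimCombo {q' : ℕ} {l : List (ℝ × LGraph k)} (hl : GoodL q' l) (n : ℕ)
    (i : Fin k) : GoodL (q' + 1) (elimCombo n i l) := by
  intro p hp
  obtain ⟨a, ha, rfl⟩ := List.mem_map.mp hp
  obtain ⟨t, vt, dt, gt⟩ := hl a ha
  by_cases hs : (a.2.ν i).isSome
  · rw [if_pos hs]
    refine ⟨CT.elim i t, ⟨vt, ?_⟩, Nat.succ_le_succ dt, ?_⟩
    · rw [gt]
      exact Option.isSome_iff_ne_none.mp hs
    · show (CT.graphOf t).removeLabel i = _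
      rw [gt]
  · rw [if_neg hs]
    exact ⟨t, vt, le_trans dt (Nat.le_succ _), gt⟩

end QGAux
namespace QGAux

open LGraph CForm

variable {k : ℕ}

attribute [local instance] Classical.propDecidable

theorem main (n : ℕ) (φ : CForm (Fin k)) : ∃ l : List (ℝ × LGraph k),
    GoodL (qr φ) l ∧
    ∀ G : LGraph k, Nat.card G.V = n → (∀ i ∈ freeVars φ, (G.ν i).isSome) →
      (Sat G.G φ G.ν → Seval l G = 1) ∧ (¬ Sat G.G φ G.ν → Seval l G = 0) := by
  induction φ with
  | eq i j =>
      refine ⟨[(1, eqLG i j)], GoodL_cons (goodG_eqLG 0 i j) (GoodL_nil 0), ?_⟩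
      intro G hcard hfree
      obtain ⟨a, ha⟩ := Option.isSome_iff_exists.mp (hfree i (by simp [freeVars]))
      obtain ⟨b, hb⟩ := Option.isSome_iff_exists.mp (hfree j (by simp [freeVars]))
      have hSat : Sat G.G (CForm.eq i j) G.ν ↔ a = b := by
        show (∃ v, G.ν i = some v ∧ G.ν j = some v) ↔ a = b
        constructor
        · rintro ⟨v, hv1, hv2⟩
          rw [ha] at hv1; rw [hb] at hv2
          rw [Option.some_injective _ hv1, Option.some_injective _ hv2]
        · rintro rfl
          exact ⟨a, ha, hb⟩
      constructor
      · intro hs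
        rw [Seval_cons, Seval_nil, lhomCount_eqLG_of_eq i j G ha hb (hSat.mp hs)]
        norm_num
      · intro hs
        rw [Seval_cons, Seval_nil,
          lhomCount_eqLG_of_ne i j G ha hb (fun h => hs (hSat.mpr h))]
        norm_num
  | adj i j =>
      by_cases hij : i = j
      · subst hij
        refine ⟨[], GoodL_nil 0, ?_⟩
        intro G hcard hfree
        constructor
        · rintro ⟨v, w, hv, hw, hadj⟩
          rw [hv] at hw
          rw [Option.some_injective _ hw] at hadj
          exact absurd hadj G.G.irrefl
        · intro _
          exact Seval_nil G
      · refine ⟨[(1, adjLG i j)], GoodL_cons (goodG_adjLG 0 i j hij) (GoodL_nil 0), ?_⟩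
        intro G hcard hfree
        obtain ⟨a, ha⟩ := Option.isSome_iff_exists.mp (hfree i (by simp [freeVars]))
        obtain ⟨b, hb⟩ := Option.isSome_iff_exists.mp (hfree j (by simp [freeVars]))
        have hSat : Sat G.G (CForm.adj i j) G.ν ↔ G.G.Adj a b := by
          show (∃ v w, G.ν i = some v ∧ G.ν j = some w ∧ G.G.Adj v w) ↔ _
          constructor
          · rintro ⟨v, w, hv, hw, hadj⟩
            rw [ha] at hv; rw [hb] at hw
            rw [Option.some_injective _ hv, Option.some_injective _ hw]
            exact hadj
          · intro h
            exact ⟨a, b, ha, hb, h⟩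
        constructor
        · intro hs
          rw [Seval_cons, Seval_nil, lhomCount_adjLG_of_adj i j hij G ha hb (hSat.mp hs)]
          norm_num
        · intro hs
          rw [Seval_cons, Seval_nil,
            lhomCount_adjLG_of_nadj i j hij G ha hb (fun h => hs (hSat.mpr h))]
          norm_num
  | not ψ ih =>
      obtain ⟨l, hGood, hEval⟩ := ih
      refine ⟨(1, emptyLG k) :: scaleCombo (-1) l,
        GoodL_cons (goodG_emptyLG _) (GoodL_scale _ hGood), ?_⟩
      intro G hcard hfree
      have hE := hEval G hcard hfree
      have hS : Seval ((1, emptyLG k) :: scaleCombo (-1) l) G = 1 + (-1) * Seval l G := by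
        rw [Seval_cons, Seval_scale, lhomCount_emptyLG]
        norm_num
      constructor
      · intro hs
        rw [hS, hE.2 hs]
        ring
      · intro hs
        rw [hS, hE.1 (Classical.not_not.mp hs)]
        ring
  | or φ₁ φ₂ ih₁ ih₂ =>
      obtain ⟨l₁, hGood₁, hEval₁⟩ := ih₁
      obtain ⟨l₂, hGood₂, hEval₂⟩ := ih₂
      have hg₁ : GoodL (qr (CForm.or φ₁ φ₂)) l₁ := hGood₁.mono (le_max_left _ _)
      have hg₂ : GoodL (qr (CForm.or φ₁ φ₂)) l₂ := hGood₂.mono (le_max_right _ _)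
      refine ⟨l₁ ++ l₂ ++ scaleCombo (-1) (mulCombo l₁ l₂),
        GoodL_append (GoodL_append hg₁ hg₂) (GoodL_scale _ (GoodL_mulCombo hg₁ hg₂)), ?_⟩
      intro G hcard hfree
      have hf₁ : ∀ i ∈ freeVars φ₁, (G.ν i).isSome := fun i hi =>
        hfree i (Finset.mem_union_left _ hi)
      have hf₂ : ∀ i ∈ freeVars φ₂, (G.ν i).isSome := fun i hi =>
        hfree i (Finset.mem_union_right _ hi)
      have hE₁ := hEval₁ G hcard hf₁
      have hE₂ := hEval₂ G hcard hf₂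
      have hS : Seval (l₁ ++ l₂ ++ scaleCombo (-1) (mulCombo l₁ l₂)) G =
          Seval l₁ G + Seval l₂ G + (-1) * (Seval l₁ G * Seval l₂ G) := by
        rw [Seval_append, Seval_append, Seval_scale, Seval_mulCombo]
      constructor
      · intro hs
        rcases (show Sat G.G φ₁ G.ν ∨ Sat G.G φ₂ G.ν from hs) with h | h
        · by_cases h2 : Sat G.G φ₂ G.ν
          · rw [hS, hE₁.1 h, hE₂.1 h2]; ring
          · rw [hS, hE₁.1 h, hE₂.2 h2]; ring
        · by_cases h1 : Sat G.G φ₁ G.ν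
          · rw [hS, hE₁.1 h1, hE₂.1 h]; ring
          · rw [hS, hE₁.2 h1, hE₂.1 h]; ring
      · intro hs
        have hns : ¬ (Sat G.G φ₁ G.ν ∨ Sat G.G φ₂ G.ν) := hs
        push_neg at hns
        rw [hS, hE₁.2 hns.1, hE₂.2 hns.2]
        ring
  | and φ₁ φ₂ ih₁ ih₂ =>
      obtain ⟨l₁, hGood₁, hEval₁⟩ := ih₁
      obtain ⟨l₂, hGood₂, hEval₂⟩ := ih₂
      refine ⟨mulCombo l₁ l₂,
        GoodL_mulCombo (hGood₁.mono (le_max_left _ _)) (hGood₂.mono (le_max_right _ _)), ?_⟩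
      intro G hcard hfree
      have hE₁ := hEval₁ G hcard (fun i hi => hfree i (Finset.mem_union_left _ hi))
      have hE₂ := hEval₂ G hcard (fun i hi => hfree i (Finset.mem_union_right _ hi))
      rw [show Seval (mulCombo l₁ l₂) G = Seval l₁ G * Seval l₂ G from Seval_mulCombo l₁ l₂ G]
      constructor
      · intro hs
        obtain ⟨h1, h2⟩ := (show Sat G.G φ₁ G.ν ∧ Sat G.G φ₂ G.ν from hs)
        rw [hE₁.1 h1, hE₂.1 h2]
        ring
      · intro hs
        have hns : ¬ (Sat G.G φ₁ G.ν ∧ Sat G.G φ₂ G.ν) := hs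
        by_cases h1 : Sat G.G φ₁ G.ν
        · have h2 : ¬ Sat G.G φ₂ G.ν := fun h => hns ⟨h1, h⟩
          rw [hE₂.2 h2]
          ring
        · rw [hE₁.2 h1]
          ring
  | count t i ψ ih =>
      obtain ⟨l, hGood, hEval⟩ := ih
      set r : ℕ → ℝ := fun m => if t ≤ m then 1 else 0 with hr
      set p : Polynomial ℝ :=
        Lagrange.interpolate (Finset.range (n + 1)) (fun m : ℕ => (m : ℝ)) r with hp
      refine ⟨(List.range (n + 1)).flatMap fun d =>
        scaleCombo (p.coeff d) (powCombo (elimCombo n i l) d), ?_, ?_⟩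
      · intro pr hpr
        obtain ⟨d, hd, hmem⟩ := List.mem_flatMap.mp hpr
        exact GoodL_scale _ (GoodL_powCombo (GoodL_elimCombo hGood n i) d) pr hmem
      · intro G hcard hfree
        haveI := G.fin
        haveI : Fintype G.V := Fintype.ofFinite _
        have hn' : Fintype.card G.V = n := by rw [← Nat.card_eq_fintype_card, hcard]
        have hfree' : ∀ v : G.V, ∀ j ∈ freeVars ψ, (((setL G i v).ν) j).isSome := by
          intro v j hj
          show (if j = i then some v else G.ν j).isSome
          by_cases hji : j = i
          · rw [if_pos hji]; rfl
          · rw [if_neg hji]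
            exact hfree j (Finset.mem_erase.mpr ⟨hji, hj⟩)
        have hSe : ∀ v : G.V, Seval l (setL G i v) =
            if Sat G.G ψ (fun j => if j = i then some v else G.ν j) then 1 else 0 := by
          intro v
          have hEv := hEval (setL G i v) hcard (hfree' v)
          by_cases h : Sat G.G ψ (fun j => if j = i then some v else G.ν j)
          · rw [if_pos h]; exact hEv.1 h
          · rw [if_neg h]; exact hEv.2 h
        set N : ℕ := (Finset.univ.filter
          (fun v : G.V => Sat G.G ψ (fun j => if j = i then some v else G.ν j))).card with hN
        have hNn : N ≤ n := le_trans (Finset.card_filter_le _ _)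
          (by rw [Finset.card_univ, hn'])
        have hSum : Seval (elimCombo n i l) G = (N : ℝ) := by
          rw [← hn', Seval_elimCombo i l G]
          rw [Finset.sum_congr rfl fun v _ => hSe v]
          exact Finset.sum_boole _ _
        have hbind : ∀ m : ℕ, Seval ((List.range m).flatMap fun d =>
            scaleCombo (p.coeff d) (powCombo (elimCombo n i l) d)) G =
            ∑ d ∈ Finset.range m, p.coeff d * (N : ℝ) ^ d := by
          intro m
          induction m with
          | zero => simp [Seval]
          | succ m ihm =>
              rw [List.range_succ, List.flatMap_append, Seval_append, ihm,
                Finset.sum_range_succ]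
              congr 1
              show Seval (scaleCombo (p.coeff m) (powCombo (elimCombo n i l) m) ++ []) G = _
              rw [Seval_append, Seval_nil, Seval_scale, Seval_powCombo, hSum]
              ring
        have hinj : Set.InjOn (fun m : ℕ => (m : ℝ)) (Finset.range (n + 1)) :=
          fun a _ b _ h => Nat.cast_injective h
        have hdeg : p.natDegree < n + 1 := by
          by_cases hp0 : p = 0
          · rw [hp0]
            simpa using Nat.succ_pos n
          · refine (Polynomial.natDegree_lt_iff_degree_lt hp0).mpr ?_
            have := Lagrange.degree_interpolate_lt r hinj
            rwa [Finset.card_range] at this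
        have hNode : Polynomial.eval ((N : ℕ) : ℝ) p = r N :=
          Lagrange.eval_interpolate_at_node r hinj (Finset.mem_range.mpr (Nat.lt_succ_of_le hNn))
        have key : Seval ((List.range (n + 1)).flatMap fun d =>
            scaleCombo (p.coeff d) (powCombo (elimCombo n i l) d)) G =
            if t ≤ N then 1 else 0 := by
          rw [hbind (n + 1), ← Polynomial.eval_eq_sum_range' hdeg, hNode]
        have hSat : Sat G.G (CForm.count t i ψ) G.ν ↔ t ≤ N := by
          show (∃ s : Finset G.V, t ≤ s.card ∧
            ∀ v ∈ s, Sat G.G ψ (fun j => if j = i then some v else G.ν j)) ↔ t ≤ N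
          constructor
          · rintro ⟨s, hts, hall⟩
            refine le_trans hts (Finset.card_le_card ?_)
            intro v hv
            exact Finset.mem_filter.mpr ⟨Finset.mem_univ v, hall v hv⟩
          · intro ht
            exact ⟨Finset.univ.filter
              (fun v : G.V => Sat G.G ψ (fun j => if j = i then some v else G.ν j)),
              ht, fun v hv => (Finset.mem_filter.mp hv).2⟩
        constructor
        · intro hs
          rw [key, if_pos (hSat.mp hs)]
        · intro hs
          rw [key, if_neg (fun h => hs (hSat.mpr h))]

end QGAux
namespace QGAux

open LGraph

variable {k : ℕ}

lemma LIso_refl (A : LGraph k) : LIso A A := by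
  refine ⟨SimpleGraph.Iso.refl, fun i => ?_⟩
  rcases h : A.ν i with _ | v
  · rfl
  · simp [SimpleGraph.Iso.refl]

end QGAux

/-- For every `C^k_q`-formula `φ` and `n ≥ 1` there is an `ℝ`-linear combination of
graphs in `L^k_q` modelling `φ` for graphs of size `n`. -/
theorem qg_from_ckq (k q : ℕ) (hk : 1 ≤ k) (hq : 1 ≤ q) (φ : CForm (Fin k))
    (hφ : CForm.qr φ ≤ q) (n : ℕ) (hn : 1 ≤ n) :
    ∃ l : List (ℝ × LGraph k), (∀ p ∈ l, p.2 ∈ Lclass k q) ∧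
      ∀ G : LGraph k, Nat.card G.V = n → (∀ i ∈ CForm.freeVars φ, (G.ν i).isSome) →
        ((CForm.Sat G.G φ G.ν →
            (l.map fun p => p.1 * (LGraph.lhomCount p.2 G : ℝ)).sum = 1) ∧
          (¬ CForm.Sat G.G φ G.ν →
            (l.map fun p => p.1 * (LGraph.lhomCount p.2 G : ℝ)).sum = 0)) := by
  obtain ⟨l, hGood, hEval⟩ := QGAux.main n φ
  refine ⟨l, ?_, ?_⟩
  · intro p hp
    obtain ⟨t, hv, hd, hg⟩ := hGood p hp
    exact ⟨t, hv, le_trans hd hφ, hg ▸ QGAux.LIso_refl _⟩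
  · intro G hcard hfree
    exact hEval G hcard hfree
end

section
/- Let k ≥ 1, q ≥ 0, and let G be a connected finite simple graph. If Robber has a winning strategy in the non-monotone q-round k-cops-and-robber game CR^k_q(G), then the graphs G_0 and G_1 are homomorphism indistinguishable over T^k_q. -/
set_option maxHeartbeats 1000000

section AuxLemmas

open Finset

private lemma zmod2_cases : ∀ x : ZMod 2, x = 0 ∨ x = 1 := by decide

private lemma odd_cast_zmod2 {c : ℕ} (hc : Odd c) : (c : ZMod 2) = 1 := by
  obtain ⟨j, rfl⟩ := hc
  push_cast
  have h2 : (2 : ZMod 2) = 0 := by decide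
  rw [h2]; ring

private lemma robberEsc_mono {V : Type*} [DecidableEq V] (G : SimpleGraph V) (k : ℕ) :
    ∀ {q p : ℕ}, p ≤ q → ∀ {X : Finset (V ⊕ Fin k)} {v : V},
      RobberEsc G k q X v → RobberEsc G k p X v := by
  intro q
  induction q with
  | zero =>
    intro p hp X v h
    have hp0 : p = 0 := by omega
    subst hp0
    trivial
  | succ q ih =>
    intro p hp X v h
    match p with
    | 0 => trivial
    | p + 1 =>
      intro Y hY hXY
      obtain ⟨u, hmv, hu, hesc⟩ := h Y hY hXY
      exact ⟨u, hmv, hu, ih (by omega) hesc⟩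

private lemma chain_top {α : Type*} (le : α → α → Prop)
    (htrans : ∀ a b c, le a b → le b c → le a c) (hrefl : ∀ a, le a a) :
    ∀ (S : Finset α), S.Nonempty → (∀ a ∈ S, ∀ b ∈ S, le a b ∨ le b a) →
    ∃ f ∈ S, ∀ b ∈ S, le b f := by
  classical
  intro S
  induction S using Finset.strongInduction with
  | _ S ih =>
    intro hne hch
    obtain ⟨x, hx⟩ := hne
    by_cases h : (S.erase x).Nonempty
    · obtain ⟨f, hfS, hf⟩ := ih (S.erase x) (Finset.erase_ssubset hx) h
        (fun a ha b hb => hch a (Finset.mem_of_mem_erase ha) b (Finset.mem_of_mem_erase hb))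
      have hfS' := Finset.mem_of_mem_erase hfS
      rcases hch x hx f hfS' with hxf | hfx
      · refine ⟨f, hfS', fun b hb => ?_⟩
        rcases eq_or_ne b x with rfl | hbx
        · exact hxf
        · exact hf b (Finset.mem_erase.2 ⟨hbx, hb⟩)
      · refine ⟨x, hx, fun b hb => ?_⟩
        rcases eq_or_ne b x with rfl | hbx
        · exact hrefl _
        · exact htrans b f x (hf b (Finset.mem_erase.2 ⟨hbx, hb⟩)) hfx
    · refine ⟨x, hx, fun b hb => ?_⟩
      rcases eq_or_ne b x with rfl | hbx
      · exact hrefl _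
      · exact absurd ⟨b, Finset.mem_erase.2 ⟨hbx, hb⟩⟩ h

private lemma rel_maximal {α : Type*} (le : α → α → Prop)
    (htrans : ∀ a b c, le a b → le b c → le a c)
    (hanti : ∀ a b, le a b → le b a → a = b) :
    ∀ (S : Finset α), S.Nonempty → ∃ g ∈ S, ∀ b ∈ S, le g b → b = g := by
  classical
  intro S
  induction S using Finset.strongInduction with
  | _ S ih =>
    intro hne
    obtain ⟨x, hx⟩ := hne
    set B := S.filter (fun b => le x b ∧ b ≠ x) with hB
    by_cases hBne : B.Nonempty
    · have hsub : B ⊂ S := by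
        refine ⟨Finset.filter_subset _ _, fun hSB => ?_⟩
        have := Finset.mem_filter.1 (hSB hx)
        exact this.2.2 rfl
      obtain ⟨g, hgB, hg⟩ := ih B hsub hBne
      have hgS := (Finset.mem_filter.1 hgB).1
      have hxg := (Finset.mem_filter.1 hgB).2.1
      have hgx := (Finset.mem_filter.1 hgB).2.2
      refine ⟨g, hgS, fun b hb hgb => ?_⟩
      have hxb := htrans x g b hxg hgb
      rcases eq_or_ne b x with rfl | hbx
      · exact absurd (hanti g b hgb hxg) hgx
      · exact hg b (Finset.mem_filter.2 ⟨hb, hxb, hbx⟩) hgb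
    · refine ⟨x, hx, fun b hb hxb => ?_⟩
      by_contra hbx
      exact hBne ⟨b, Finset.mem_filter.2 ⟨hb, hxb, hbx⟩⟩

private lemma even_ncard_symmDiff {α : Type*} [Finite α] (S T : Set α) :
    Even (symmDiff S T).ncard ↔ (Even S.ncard ↔ Even T.ncard) := by
  have h1 : (S ∪ T).ncard + (S ∩ T).ncard = S.ncard + T.ncard :=
    Set.ncard_union_add_ncard_inter S T
  have h2 : symmDiff S T ∪ (S ∩ T) = S ∪ T := by
    ext x; simp [Set.mem_symmDiff]; tauto
  have h3 : Disjoint (symmDiff S T) (S ∩ T) := by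
    rw [Set.disjoint_left]
    intro x hx hx2
    simp [Set.mem_symmDiff] at hx
    simp at hx2
    tauto
  have h4 : (symmDiff S T).ncard + (S ∩ T).ncard = (S ∪ T).ncard := by
    rw [← h2]; exact (Set.ncard_union_eq h3).symm
  simp only [Nat.even_iff] at *
  omega

end AuxLemmas
section Bnd

open Finset
open scoped Classical

variable {n : ℕ} (G : SimpleGraph (Fin n))

/-- Boundary (mod 2) of an edge vector at a vertex. -/
private noncomputable def bnd (t : Sym2 (Fin n) → ZMod 2) (v : Fin n) : ZMod 2 :=
  ∑ w : Fin n, if G.Adj v w then t s(v, w) else 0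

private lemma bnd_zero (v : Fin n) : bnd G (fun _ => 0) v = 0 := by
  unfold bnd; simp

private lemma bnd_add (t t' : Sym2 (Fin n) → ZMod 2) (v : Fin n) :
    bnd G (t + t') v = bnd G t v + bnd G t' v := by
  unfold bnd
  rw [← Finset.sum_add_distrib]
  apply Finset.sum_congr rfl
  intro w _
  by_cases h : G.Adj v w <;> simp [h]

private lemma bnd_single {x y : Fin n} (hxy : G.Adj x y) (v : Fin n) :
    bnd G (fun e => if e = s(x, y) then 1 else 0) v
      = (if v = x then 1 else 0) + (if v = y then 1 else 0) := by
  classical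
  have hne : x ≠ y := hxy.ne
  unfold bnd
  beta_reduce
  by_cases hvx : v = x
  · subst hvx
    rw [Finset.sum_eq_single y]
    · simp [hxy, hne]
    · intro b _ hb
      rcases em (G.Adj v b) with hadj | hadj
      · rw [if_pos hadj, if_neg (fun h => hb (Sym2.congr_right.1 h))]
      · rw [if_neg hadj]
    · simp
  · by_cases hvy : v = y
    · subst hvy
      rw [Finset.sum_eq_single x]
      · have hs : s(v, x) = s(x, v) := Sym2.eq_swap
        rw [if_pos hxy.symm, hs, if_pos rfl, if_neg hvx, if_pos rfl]
        decide
      · intro b _ hb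
        rcases em (G.Adj v b) with hadj | hadj
        · rw [if_pos hadj, if_neg]
          intro h
          rcases Sym2.eq_iff.1 h with ⟨h1, _⟩ | ⟨_, h2⟩
          · exact hvx h1
          · exact hb h2
        · rw [if_neg hadj]
      · simp
    · rw [Finset.sum_eq_zero, if_neg hvx, if_neg hvy]
      · simp
      · intro b _
        rcases em (G.Adj v b) with hadj | hadj
        · rw [if_pos hadj, if_neg]
          intro h
          rcases Sym2.eq_iff.1 h with ⟨h1, _⟩ | ⟨h1, _⟩
          · exact hvx h1
          · exact hvy h1
        · rw [if_neg hadj]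

/-- The (mod 2) edge-indicator vector of a walk. -/
private noncomputable def wvec {a b : Fin n} (p : G.Walk a b) : Sym2 (Fin n) → ZMod 2 :=
  fun e => ((p.edges.count e : ℕ) : ZMod 2)

private lemma wvec_nil {a : Fin n} : wvec G (SimpleGraph.Walk.nil : G.Walk a a) = fun _ => 0 := by
  funext e; simp [wvec]

private lemma wvec_cons {a c b : Fin n} (h : G.Adj a c) (p : G.Walk c b) :
    wvec G (SimpleGraph.Walk.cons h p)
      = (fun e => if e = s(a, c) then 1 else 0) + wvec G p := by
  classical
  funext e
  simp only [wvec, SimpleGraph.Walk.edges_cons, List.count_cons, Pi.add_apply]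
  rcases eq_or_ne e s(a, c) with rfl | hne
  · simp [add_comm]
  · simp [hne, Ne.symm hne]

private lemma wvec_bnd {a b : Fin n} (p : G.Walk a b) (v : Fin n) :
    bnd G (wvec G p) v = (if v = a then 1 else 0) + (if v = b then 1 else 0) := by
  induction p with
  | nil =>
    rename_i u
    rw [wvec_nil, bnd_zero]
    rcases eq_or_ne v u with rfl | hva
    · rw [if_pos rfl]
      decide
    · rw [if_neg hva]
      decide
  | @cons a c b h p ih =>
    rw [wvec_cons, bnd_add, bnd_single G h, ih]
    have key : ∀ x y z : ZMod 2, (x + z) + (z + y) = x + y := by decide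
    exact key _ _ _

private lemma wvec_support {a b : Fin n} (p : G.Walk a b) {v : Fin n}
    (hv : v ∉ p.support) : ∀ e : Sym2 (Fin n), v ∈ e → wvec G p e = 0 := by
  induction p with
  | nil => intro e _; rw [wvec_nil]
  | @cons a c b h p ih =>
    intro e hve
    rw [SimpleGraph.Walk.support_cons] at hv
    simp only [List.mem_cons] at hv
    push_neg at hv
    rw [wvec_cons]
    have h1 : (if e = s(a, c) then (1 : ZMod 2) else 0) = 0 := by
      rw [if_neg]
      intro he
      subst he
      rcases Sym2.mem_iff.1 hve with rfl | rfl
      · exact hv.1 rfl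
      · exact hv.2 (SimpleGraph.Walk.start_mem_support p)
    have h2 : wvec G p e = 0 := ih (fun hs => hv.2 hs) e hve
    simp [h1, h2]

/-- Realization of any even boundary in a connected graph. -/
private lemma bnd_realize (hconn : G.Connected) :
    ∀ (N : ℕ) (c : Fin n → ZMod 2),
      (Finset.univ.filter (fun v => c v ≠ 0)).card ≤ N →
      (∑ v, c v = 0) → ∃ t, ∀ v, bnd G t v = c v := by
  classical
  intro N
  induction N with
  | zero =>
    intro c hc _
    have hall : ∀ v, c v = 0 := by
      intro v
      by_contra hv
      have hmem : v ∈ Finset.univ.filter (fun v => c v ≠ 0) := by simp [hv]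
      have := Finset.card_pos.2 ⟨v, hmem⟩
      omega
    exact ⟨fun _ => 0, fun v => by rw [bnd_zero, hall v]⟩
  | succ N ih =>
    intro c hc hsum
    by_cases h0 : (Finset.univ.filter (fun v => c v ≠ 0)).card = 0
    · have hall : ∀ v, c v = 0 := by
        intro v
        by_contra hv
        have hv' : v ∈ Finset.univ.filter (fun v => c v ≠ 0) := by simp [hv]
        have := Finset.card_pos.2 ⟨v, hv'⟩
        omega
      exact ⟨fun _ => 0, fun v => by rw [bnd_zero, hall v]⟩
    · have hne : (Finset.univ.filter (fun v => c v ≠ 0)).Nonempty :=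
        Finset.card_pos.1 (by omega)
      obtain ⟨a, ha⟩ := hne
      have hca : c a ≠ 0 := (Finset.mem_filter.1 ha).2
      have hb : ∃ b, b ≠ a ∧ c b ≠ 0 := by
        by_contra hb
        push_neg at hb
        have hsa : ∑ v, c v = c a := by
          rw [Finset.sum_eq_single a]
          · intro b _ hba
            by_contra hcb
            exact hcb (hb b hba)
          · simp
        rw [hsum] at hsa
        exact hca hsa.symm
      obtain ⟨b, hba, hcb⟩ := hb
      set c' : Fin n → ZMod 2 :=
        fun v => c v + (if v = a then 1 else 0) + (if v = b then 1 else 0) with hc'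
      have hca1 : c a = 1 := (zmod2_cases (c a)).resolve_left hca
      have hcb1 : c b = 1 := (zmod2_cases (c b)).resolve_left hcb
      have h11 : (1 : ZMod 2) + 1 = 0 := by decide
      have hsupp : Finset.univ.filter (fun v => c' v ≠ 0)
          ⊆ ((Finset.univ.filter (fun v => c v ≠ 0)).erase a).erase b := by
        intro v hv
        rw [Finset.mem_filter] at hv
        rcases eq_or_ne v a with rfl | hva
        · exfalso
          apply hv.2
          simp [hc', hca1, hba.symm, h11]
        · rcases eq_or_ne v b with rfl | hvb
          · exfalso
            apply hv.2
            simp [hc', hcb1, hva, h11]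
          · rw [Finset.mem_erase, Finset.mem_erase, Finset.mem_filter]
            refine ⟨hvb, hva, Finset.mem_univ v, ?_⟩
            intro hcv
            apply hv.2
            simp [hc', hva, hvb, hcv]
      have hcard : (Finset.univ.filter (fun v => c' v ≠ 0)).card ≤ N := by
        have h1 := Finset.card_le_card hsupp
        have h2 : (((Finset.univ.filter (fun v => c v ≠ 0)).erase a).erase b).card
            = (Finset.univ.filter (fun v => c v ≠ 0)).card - 2 := by
          rw [Finset.card_erase_of_mem, Finset.card_erase_of_mem ha]
          · omega
          · rw [Finset.mem_erase]
            exact ⟨hba, by simp [hcb]⟩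
        have h3 := Finset.card_pos.2 ⟨a, ha⟩
        omega
      have hsum' : ∑ v, c' v = 0 := by
        simp only [hc']
        rw [Finset.sum_add_distrib, Finset.sum_add_distrib, hsum]
        simp [h11]
      obtain ⟨t', ht'⟩ := ih c' hcard hsum'
      obtain ⟨p⟩ := hconn.preconnected a b
      refine ⟨t' + wvec G p, fun v => ?_⟩
      rw [bnd_add, ht' v, wvec_bnd]
      simp only [hc']
      have key : ∀ x u w : ZMod 2, (x + u + w) + (u + w) = x := by decide
      exact key _ _ _

end Bnd
section Step

open Finset
open scoped Classical

private lemma parity_bridge {n : ℕ} (G : SimpleGraph (Fin n))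
    (t : Sym2 (Fin n) → ZMod 2) (v : Fin n) :
    Even {e | e ∈ G.incidenceSet v ∧ t e = 1}.ncard ↔ bnd G t v = 0 := by
  classical
  set Nw := Finset.univ.filter (fun w => G.Adj v w ∧ t s(v, w) = 1) with hNw
  have h1 : bnd G t v = (Nw.card : ZMod 2) := by
    unfold bnd
    have hterm : ∀ w, (if G.Adj v w then t s(v, w) else 0)
        = (if (G.Adj v w ∧ t s(v, w) = 1) then (1 : ZMod 2) else 0) := by
      intro w
      rcases em (G.Adj v w) with ha | ha
      · rcases zmod2_cases (t s(v, w)) with h | h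
        · rw [if_pos ha, h, if_neg]
          rintro ⟨_, hc⟩
          exact absurd hc (by decide)
        · rw [if_pos ha, h, if_pos ⟨ha, rfl⟩]
      · rw [if_neg ha, if_neg (fun hc => ha hc.1)]
    rw [Finset.sum_congr rfl (fun w _ => hterm w), Finset.sum_boole]
  have h2 : {e | e ∈ G.incidenceSet v ∧ t e = 1} = ↑(Nw.image (fun w => s(v, w))) := by
    ext e
    induction e using Sym2.ind with
    | _ x y =>
      simp only [Set.mem_setOf_eq, Finset.coe_image, Set.mem_image, Finset.mem_coe,
        hNw, Finset.mem_filter, Finset.mem_univ, true_and]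
      constructor
      · rintro ⟨hi, ht⟩
        have hv : v ∈ s(x, y) := hi.2
        have hedge : s(x, y) ∈ G.edgeSet := hi.1
        rcases Sym2.mem_iff.1 hv with rfl | rfl
        · exact ⟨y, ⟨(G.mem_edgeSet).1 hedge, ht⟩, rfl⟩
        · refine ⟨x, ⟨((G.mem_edgeSet).1 hedge).symm, ?_⟩, ?_⟩
          · rwa [show s(v, x) = s(x, v) from Sym2.eq_swap]
          · exact Sym2.eq_swap
      · rintro ⟨w, ⟨hadj, ht⟩, hse⟩
        rw [← hse]
        exact ⟨⟨(G.mem_edgeSet).2 hadj, Sym2.mem_mk_left v w⟩, ht⟩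
  have hinj : Set.InjOn (fun w => s(v, w)) ↑Nw := by
    intro w1 _ w2 _ he
    exact Sym2.congr_right.1 he
  rw [h2, Set.ncard_coe_finset, Finset.card_image_of_injOn hinj, h1]
  constructor
  · rintro ⟨j, hj⟩
    rw [hj]
    push_cast
    have : (j : ZMod 2) + j = 2 * j := by ring
    rw [this, show (2 : ZMod 2) = 0 from by decide, zero_mul]
  · intro h0
    have hdvd := (ZMod.natCast_eq_zero_iff Nw.card 2).1 h0
    exact (Nat.even_iff).2 (by omega)

private noncomputable def dep {k q m : ℕ} {F : SimpleGraph (Fin m)}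
    (cov : PebbleForestCover F k q) (a : Fin m) : ℕ :=
  Set.ncard {u | cov.le u a}

private lemma step {n k q m : ℕ} (G : SimpleGraph (Fin n)) (F : SimpleGraph (Fin m))
    (cov : PebbleForestCover F k q) (h : Fin m → Fin n) (U : Set (Fin n))
    (hU : Odd U.ncard) (hconn : G.Connected) (hrob : RobberWinsGame G k q) (hk : 1 ≤ k) :
    ∀ (N : ℕ) (A : Finset (Fin m)), A.card ≤ N → (∀ a ∈ A, ∀ b, cov.le b a → b ∈ A) →
    ∃ (r : Fin m → Fin n) (t : Fin m → Sym2 (Fin n) → ZMod 2)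
      (X : Fin m → Finset ((Fin n) ⊕ (Fin k))),
      ∀ a ∈ A,
        RobberEsc G k (q - dep cov a) (X a) (r a) ∧
        Sum.inl (r a) ∉ X a ∧
        (X a).card = k ∧
        Sum.inl (h a) ∈ X a ∧
        (∀ f', cov.le f' a → (∃ e', F.Adj f' e' ∧ cov.le a e') → Sum.inl (h f') ∈ X a) ∧
        (∀ v, bnd G (t a) v = (if v ∈ U then 1 else 0) + (if v = r a then 1 else 0)) ∧
        (∀ b ∈ A, cov.le a b →
          ∀ f', cov.le f' a → (∃ e', F.Adj f' e' ∧ cov.le b e') →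
          ∀ e : Sym2 (Fin n), h f' ∈ e → t a e = t b e) := by
  haveI : Nonempty (Fin n) := hconn.nonempty
  intro N
  induction N with
  | zero =>
    intro A hA _
    refine ⟨fun _ => Classical.arbitrary (Fin n), fun _ _ => 0, fun _ => ∅, ?_⟩
    intro a ha
    exact absurd (Finset.card_pos.2 ⟨a, ha⟩) (by omega)
  | succ N ih =>
    intro A hA hdc
    rcases A.eq_empty_or_nonempty with rfl | hAne
    · refine ⟨fun _ => Classical.arbitrary (Fin n), fun _ _ => 0, fun _ => ∅, ?_⟩
      intro a ha
      simp at ha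
    · obtain ⟨g, hgA, hgmax⟩ := rel_maximal cov.le cov.le_trans cov.le_antisymm A hAne
      set A' := A.erase g with hA'def
      have hdc' : ∀ a ∈ A', ∀ b, cov.le b a → b ∈ A' := by
        intro a ha b hba
        have haA : a ∈ A := Finset.mem_of_mem_erase ha
        have hbA : b ∈ A := hdc a haA b hba
        rw [hA'def, Finset.mem_erase]
        refine ⟨?_, hbA⟩
        rintro rfl
        exact (Finset.mem_erase.1 ha).1 (hgmax a haA hba)
      have hcardA' : A'.card ≤ N := by
        rw [hA'def, Finset.card_erase_of_mem hgA]
        have := Finset.card_pos.2 hAne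
        omega
      obtain ⟨r, t, X, hIH⟩ := ih A' hcardA' hdc'
      obtain ⟨dp, rp, tp, Xp, hdg, hescp, hrp, hXpcard, hI4p, hbndp, hcompp⟩ :
          ∃ (dp : ℕ) (rp : Fin n) (tp : Sym2 (Fin n) → ZMod 2) (Xp : Finset (Fin n ⊕ Fin k)),
            dep cov g = dp + 1 ∧
            RobberEsc G k (q - dp) Xp rp ∧
            Sum.inl rp ∉ Xp ∧ Xp.card = k ∧
            (∀ f', cov.le f' g → f' ≠ g → (∃ e', F.Adj f' e' ∧ cov.le g e') →
              Sum.inl (h f') ∈ Xp) ∧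
            (∀ v, bnd G tp v = (if v ∈ U then 1 else 0) + (if v = rp then 1 else 0)) ∧
            (∀ a ∈ A', cov.le a g → ∀ f', cov.le f' a →
              (∃ e', F.Adj f' e' ∧ cov.le g e') →
              ∀ e : Sym2 (Fin n), h f' ∈ e → t a e = tp e) := by
        by_cases hS : (Finset.univ.filter (fun a => cov.le a g ∧ a ≠ g)).Nonempty
        · -- g is not a root: use the state at its parent f
          obtain ⟨f, hfS, hftop⟩ := chain_top cov.le cov.le_trans cov.le_refl _ hS
            (fun a ha b hb => cov.downChain a b g
              ((Finset.mem_filter.1 ha).2.1) ((Finset.mem_filter.1 hb).2.1))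
          have hfg : cov.le f g := (Finset.mem_filter.1 hfS).2.1
          have hfneg : f ≠ g := (Finset.mem_filter.1 hfS).2.2
          have hfA' : f ∈ A' := Finset.mem_erase.2 ⟨hfneg, hdc g hgA f hfg⟩
          obtain ⟨hEf, hRf, hCf, hSf, hI4f, hBf, hCompf⟩ := hIH f hfA'
          refine ⟨dep cov f, r f, t f, X f, ?_, hEf, hRf, hCf, ?_, hBf, ?_⟩
          · have hset : {u | cov.le u g} = insert g {u | cov.le u f} := by
              ext u
              simp only [Set.mem_setOf_eq, Set.mem_insert_iff]
              constructor
              · intro hug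
                rcases eq_or_ne u g with rfl | hune
                · exact Or.inl rfl
                · exact Or.inr (hftop u
                    (Finset.mem_filter.2 ⟨Finset.mem_univ u, hug, hune⟩))
              · rintro (rfl | huf)
                · exact cov.le_refl u
                · exact cov.le_trans u f g huf hfg
            have hgnot : g ∉ {u | cov.le u f} := by
              intro hgf
              exact hfneg (cov.le_antisymm f g hfg hgf)
            unfold dep
            rw [hset, Set.ncard_insert_of_notMem hgnot]
          · intro f' hf'g hf'ne hex
            have hf'f : cov.le f' f := hftop f'
              (Finset.mem_filter.2 ⟨Finset.mem_univ f', hf'g, hf'ne⟩)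
            obtain ⟨e', hadj, hge'⟩ := hex
            exact hI4f f' hf'f ⟨e', hadj, cov.le_trans f g e' hfg hge'⟩
          · intro a haA' hag f' hf'a hex e he
            obtain ⟨e', hadj, hge'⟩ := hex
            have hane : a ≠ g := (Finset.mem_erase.1 haA').1
            have haf : cov.le a f := hftop a
              (Finset.mem_filter.2 ⟨Finset.mem_univ a, hag, hane⟩)
            exact (hIH a haA').2.2.2.2.2.2 f hfA' haf f' hf'a
              ⟨e', hadj, cov.le_trans f g e' hfg hge'⟩ e he
        · -- g is a root
          obtain ⟨r0, hr0⟩ := hrob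
          have hsum : ∑ v, ((if v ∈ U then 1 else 0) + (if v = r0 then 1 else 0) : ZMod 2)
              = 0 := by
            rw [Finset.sum_add_distrib]
            have h1 : ∑ v : Fin n, (if v ∈ U then (1 : ZMod 2) else 0)
                = (U.ncard : ZMod 2) := by
              rw [Finset.sum_boole]
              congr 1
              rw [Set.ncard_eq_toFinset_card']
              congr 1
              ext v
              simp
            have h2 : ∑ v : Fin n, (if v = r0 then (1 : ZMod 2) else 0) = 1 := by
              simp
            rw [h1, h2, odd_cast_zmod2 hU]
            decide
          obtain ⟨t0, ht0⟩ := bnd_realize G hconn n _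
            (le_trans (Finset.card_filter_le _ _) (by simp)) hsum
          refine ⟨0, r0, t0, initPos (Fin n) k, ?_, ?_, ?_, ?_, ?_, ht0, ?_⟩
          · have hsingle : {u | cov.le u g} = {g} := by
              ext u
              simp only [Set.mem_setOf_eq, Set.mem_singleton_iff]
              constructor
              · intro hug
                by_contra hune
                exact hS ⟨u, Finset.mem_filter.2 ⟨Finset.mem_univ u, hug, hune⟩⟩
              · rintro rfl
                exact cov.le_refl u
            unfold dep
            rw [hsingle, Set.ncard_singleton]
          · simpa using hr0
          · simp [initPos]
          · rw [initPos, Finset.card_image_of_injective _ Sum.inr_injective,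
              Finset.card_univ, Fintype.card_fin]
          · intro f' h1 h2 _
            exact absurd ⟨f', Finset.mem_filter.2 ⟨Finset.mem_univ f', h1, h2⟩⟩ hS
          · intro a haA' hag f' hf'a hex e he
            exact absurd ⟨a, Finset.mem_filter.2
              ⟨Finset.mem_univ a, hag, (Finset.mem_erase.1 haA').1⟩⟩ hS
      have hdq : dep cov g ≤ q := cov.heightLE g
      have hqd : q - dp = (q - dep cov g) + 1 := by omega
      by_cases hmem : Sum.inl (h g) ∈ Xp
      · -- SKIP: the image of g is already covered, keep everything
        refine ⟨Function.update r g rp, Function.update t g tp, Function.update X g Xp, ?_⟩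
        intro a haA
        rcases eq_or_ne a g with rfl | hag
        · simp only [Function.update_self]
          refine ⟨?_, hrp, hXpcard, hmem, ?_, hbndp, ?_⟩
          · exact robberEsc_mono G k (by omega) hescp
          · intro f' hf' hex
            rcases eq_or_ne f' a with rfl | hne
            · exact hmem
            · exact hI4p f' hf' hne hex
          · intro b hbA hgb f' hf'g hex e he
            have hbg : b = a := hgmax b hbA hgb
            subst hbg
            rw [Function.update_self]
        · have haA' : a ∈ A' := Finset.mem_erase.2 ⟨hag, haA⟩
          obtain ⟨h1, h2, h3, h4, h5, h6, h7⟩ := hIH a haA'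
          simp only [Function.update_of_ne hag]
          refine ⟨h1, h2, h3, h4, h5, h6, ?_⟩
          intro b hbA hab f' hf'a hex e he
          rcases eq_or_ne b g with rfl | hbg
          · rw [Function.update_self]
            exact hcompp a haA' hab f' hf'a hex e he
          · rw [Function.update_of_ne hbg]
            exact h7 b (Finset.mem_erase.2 ⟨hbg, hbA⟩) hab f' hf'a hex e he
      · -- MOVE: place the pebble of g on h g, query the robber
        set neededF := Finset.univ.filter
          (fun f' => cov.le f' g ∧ f' ≠ g ∧ ∃ e', F.Adj f' e' ∧ cov.le g e') with hneededF
        have hcardneed : neededF.card ≤ k - 1 := by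
          have hinj : Set.InjOn cov.peb ↑neededF := by
            intro f1 hm1 f2 hm2 hpeq
            by_contra hne12
            rw [Finset.mem_coe] at hm1 hm2
            obtain ⟨_, hle1, hne1, e1, hadj1, hge1⟩ := Finset.mem_filter.1 hm1
            obtain ⟨_, hle2, hne2, e2, hadj2, hge2⟩ := Finset.mem_filter.1 hm2
            rcases cov.downChain f1 f2 g hle1 hle2 with h12 | h21
            · exact cov.pebbleCond hadj1 (cov.le_trans f1 g e1 hle1 hge1) h12
                (cov.le_trans f2 g e1 hle2 hge1) hne12 hpeq
            · exact cov.pebbleCond hadj2 (cov.le_trans f2 g e2 hle2 hge2) h21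
                (cov.le_trans f1 g e2 hle1 hge2) (Ne.symm hne12) hpeq.symm
          have hmap : ∀ f' ∈ neededF, cov.peb f' ∈ Finset.univ.erase (cov.peb g) := by
            intro f' hf'
            obtain ⟨_, hle, hne, e', hadj, hge'⟩ := Finset.mem_filter.1 hf'
            refine Finset.mem_erase.2 ⟨?_, Finset.mem_univ _⟩
            exact cov.pebbleCond hadj (cov.le_trans f' g e' hle hge') hle hge' hne
          have hle := Finset.card_le_card_of_injOn cov.peb hmap hinj
          have hce : (Finset.univ.erase (cov.peb g)).card = k - 1 := by
            rw [Finset.card_erase_of_mem (Finset.mem_univ _), Finset.card_univ,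
              Fintype.card_fin]
          omega
        set needed' := neededF.image (fun f' => (Sum.inl (h f') : Fin n ⊕ Fin k))
          with hneeded'
        have hn'sub : needed' ⊆ Xp := by
          intro x hx
          obtain ⟨f', hf', rfl⟩ := Finset.mem_image.1 hx
          obtain ⟨_, hle, hne, hex⟩ := Finset.mem_filter.1 hf'
          exact hI4p f' hle hne hex
        have hzex : ∃ z ∈ Xp, z ∉ needed' := by
          have hle1 : needed'.card ≤ neededF.card := Finset.card_image_le
          by_contra hno
          push_neg at hno
          have := Finset.card_le_card (fun x hx => hno x hx)
          omega
        obtain ⟨z, hzXp, hzn⟩ := hzex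
        set Y := insert (Sum.inl (h g)) (Xp.erase z) with hY
        have hgY : (Sum.inl (h g) : Fin n ⊕ Fin k) ∈ Y := Finset.mem_insert_self _ _
        have hYcard : Y.card = k := by
          rw [hY, Finset.card_insert_of_notMem
            (fun hc => hmem (Finset.mem_of_mem_erase hc)),
            Finset.card_erase_of_mem hzXp, hXpcard]
          omega
        have hXY : Xp ∩ Y = Xp.erase z := by
          ext x
          simp only [Finset.mem_inter, hY, Finset.mem_insert, Finset.mem_erase]
          constructor
          · rintro ⟨hxXp, (rfl | ⟨hxz, _⟩)⟩
            · exact absurd hxXp hmem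
            · exact ⟨hxz, hxXp⟩
          · rintro ⟨hxz, hxXp⟩
            exact ⟨hxXp, Or.inr ⟨hxz, hxXp⟩⟩
        have hXYcard : (Xp ∩ Y).card = k - 1 := by
          rw [hXY, Finset.card_erase_of_mem hzXp, hXpcard]
        rw [hqd] at hescp
        simp only [RobberEsc] at hescp
        obtain ⟨u, hmov, huY, hescu⟩ := hescp Y hYcard hXYcard
        obtain ⟨p, hp⟩ := hmov
        have hmemerase : ∀ f' ∈ neededF, (Sum.inl (h f') : Fin n ⊕ Fin k) ∈ Xp.erase z := by
          intro f' hf'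
          refine Finset.mem_erase.2 ⟨?_, hn'sub (Finset.mem_image_of_mem _ hf')⟩
          intro hzz
          exact hzn (hzz ▸ Finset.mem_image_of_mem _ hf')
        have havoid : ∀ f' ∈ neededF, h f' ∉ p.support := by
          intro f' hf' hsup
          apply hp (h f') hsup
          rw [hXY]
          exact hmemerase f' hf'
        refine ⟨Function.update r g u, Function.update t g (tp + wvec G p),
          Function.update X g Y, ?_⟩
        intro a haA
        rcases eq_or_ne a g with rfl | hag
        · simp only [Function.update_self]
          refine ⟨hescu, huY, hYcard, hgY, ?_, ?_, ?_⟩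
          · intro f' hf' hex
            rcases eq_or_ne f' a with rfl | hne
            · exact hgY
            · have hf'n : f' ∈ neededF :=
                Finset.mem_filter.2 ⟨Finset.mem_univ _, hf', hne, hex⟩
              exact Finset.mem_insert_of_mem (hmemerase f' hf'n)
          · intro v
            rw [bnd_add, hbndp v, wvec_bnd]
            have key : ∀ xU xr xu : ZMod 2, (xU + xr) + (xr + xu) = xU + xu := by decide
            exact key _ _ _
          · intro b hbA hgb f' hf'g hex e he
            have hbg : b = a := hgmax b hbA hgb
            subst hbg
            rw [Function.update_self]
        · have haA' : a ∈ A' := Finset.mem_erase.2 ⟨hag, haA⟩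
          obtain ⟨h1, h2, h3, h4, h5, h6, h7⟩ := hIH a haA'
          simp only [Function.update_of_ne hag]
          refine ⟨h1, h2, h3, h4, h5, h6, ?_⟩
          intro b hbA hab f' hf'a hex e he
          rcases eq_or_ne b g with rfl | hbg
          · rw [Function.update_self]
            have hta : t a e = tp e := hcompp a haA' hab f' hf'a hex e he
            have hnots : h f' ∉ p.support := by
              have hf'b : cov.le f' b := cov.le_trans f' a b hf'a hab
              have hf'ne : f' ≠ b := by
                rintro rfl
                exact hag (cov.le_antisymm a f' hab hf'a)
              exact havoid f' (Finset.mem_filter.2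
                ⟨Finset.mem_univ _, hf'b, hf'ne, hex⟩)
            have hwv : wvec G p e = 0 := wvec_support G p hnots e he
            show t a e = tp e + wvec G p e
            rw [hwv, add_zero]
            exact hta
          · rw [Function.update_of_ne hbg]
            exact h7 b (Finset.mem_erase.2 ⟨hbg, hbA⟩) hab f' hf'a hex e he

end Step
section Final

open Finset
open scoped Classical

private lemma key {n k q m : ℕ} (G : SimpleGraph (Fin n)) (F : SimpleGraph (Fin m))
    (cov : PebbleForestCover F k q) (U : Set (Fin n)) (hU : Odd U.ncard)
    (hconn : G.Connected) (hrob : RobberWinsGame G k q) (hk : 1 ≤ k)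
    (h : Fin m → Fin n) :
    ∃ t : Fin m → Sym2 (Fin n) → ZMod 2,
      (∀ f : Fin m, (Even {e | e ∈ G.incidenceSet (h f) ∧ t f e = 1}.ncard ↔ h f ∉ U)) ∧
      (∀ u v : Fin m, F.Adj u v → t u s(h u, h v) = t v s(h u, h v)) := by
  obtain ⟨r, t, X, hstep⟩ := step G F cov h U hU hconn hrob hk m Finset.univ
    (le_of_eq (by simp)) (fun _ _ b _ => Finset.mem_univ b)
  refine ⟨t, ?_, ?_⟩
  · intro f
    obtain ⟨hE, hrX, hcX, hhX, hI4, hbnd, hcomp⟩ := hstep f (Finset.mem_univ f)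
    have hne : h f ≠ r f := by
      intro heq
      exact hrX (heq ▸ hhX)
    have hb : bnd G (t f) (h f) = (if h f ∈ U then 1 else 0) := by
      rw [hbnd (h f), if_neg hne, add_zero]
    rw [parity_bridge G (t f) (h f), hb]
    by_cases hU' : h f ∈ U
    · rw [if_pos hU']
      constructor
      · intro h1
        exact absurd h1 (by decide)
      · intro h1
        exact absurd hU' h1
    · rw [if_neg hU']
      simp [hU']
  · intro u v huv
    rcases cov.cover huv with hle | hle
    · exact (hstep u (Finset.mem_univ u)).2.2.2.2.2.2 v (Finset.mem_univ v) hle u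
        (cov.le_refl u) ⟨v, huv, cov.le_refl v⟩ s(h u, h v) (Sym2.mem_mk_left _ _)
    · exact ((hstep v (Finset.mem_univ v)).2.2.2.2.2.2 u (Finset.mem_univ u) hle v
        (cov.le_refl v) ⟨u, huv.symm, cov.le_refl u⟩ s(h u, h v) (Sym2.mem_mk_right _ _)).symm

private noncomputable def twmap {n m : ℕ} (G : SimpleGraph (Fin n)) (U₁ U₂ : Set (Fin n))
    (T : (Fin m → Fin n) → Fin m → Sym2 (Fin n) → ZMod 2)
    (hpar : ∀ (h : Fin m → Fin n) (f : Fin m),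
      Even {e | e ∈ G.incidenceSet (h f) ∧ T h f e = 1}.ncard ↔ (h f ∉ U₂ ↔ h f ∉ U₁))
    (φ : Fin m → CFIvert G U₁) (f : Fin m) : CFIvert G U₂ :=
  ⟨((φ f).1.1,
    symmDiff (φ f).1.2
      {e | e ∈ G.incidenceSet ((φ f).1.1) ∧ T (fun x => (φ x).1.1) f e = 1}), by
    constructor
    · intro e he
      rcases Set.mem_symmDiff.1 he with ⟨h1, _⟩ | ⟨h1, _⟩
      · exact (φ f).2.1 h1
      · exact h1.1
    · have hp : Even {e | e ∈ G.incidenceSet ((φ f).1.1)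
          ∧ T (fun x => (φ x).1.1) f e = 1}.ncard
          ↔ (((φ f).1.1 ∉ U₂) ↔ ((φ f).1.1 ∉ U₁)) := hpar (fun x => (φ x).1.1) f
      have hs := (φ f).2.2
      rw [even_ncard_symmDiff]
      tauto⟩

private lemma twmap_hom {n m : ℕ} (G : SimpleGraph (Fin n)) (F : SimpleGraph (Fin m))
    (U₁ U₂ : Set (Fin n))
    (T : (Fin m → Fin n) → Fin m → Sym2 (Fin n) → ZMod 2)
    (hpar : ∀ (h : Fin m → Fin n) (f : Fin m),
      Even {e | e ∈ G.incidenceSet (h f) ∧ T h f e = 1}.ncard ↔ (h f ∉ U₂ ↔ h f ∉ U₁))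
    (hcomp : ∀ (h : Fin m → Fin n) (u v : Fin m), F.Adj u v →
      T h u s(h u, h v) = T h v s(h u, h v))
    (φ : Fin m → CFIvert G U₁)
    (hφ : ∀ ⦃u v⦄, F.Adj u v → (CFI G U₁).Adj (φ u) (φ v)) :
    ∀ ⦃u v⦄, F.Adj u v →
      (CFI G U₂).Adj (twmap G U₁ U₂ T hpar φ u) (twmap G U₁ U₂ T hpar φ v) := by
  intro u v huv
  obtain ⟨hGadj, hnm⟩ := hφ huv
  refine ⟨hGadj, ?_⟩
  have hTu : (s((φ u).1.1, (φ v).1.1) ∈ {e | e ∈ G.incidenceSet ((φ u).1.1)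
      ∧ T (fun x => (φ x).1.1) u e = 1})
      ↔ T (fun x => (φ x).1.1) u s((φ u).1.1, (φ v).1.1) = 1 := by
    constructor
    · rintro ⟨_, ht⟩
      exact ht
    · intro ht
      exact ⟨⟨(G.mem_edgeSet).2 hGadj, Sym2.mem_mk_left _ _⟩, ht⟩
  have hTv : (s((φ u).1.1, (φ v).1.1) ∈ {e | e ∈ G.incidenceSet ((φ v).1.1)
      ∧ T (fun x => (φ x).1.1) v e = 1})
      ↔ T (fun x => (φ x).1.1) v s((φ u).1.1, (φ v).1.1) = 1 := by
    constructor
    · rintro ⟨_, ht⟩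
      exact ht
    · intro ht
      exact ⟨⟨(G.mem_edgeSet).2 hGadj, Sym2.mem_mk_right _ _⟩, ht⟩
  have hTT : (s((φ u).1.1, (φ v).1.1) ∈ {e | e ∈ G.incidenceSet ((φ u).1.1)
      ∧ T (fun x => (φ x).1.1) u e = 1})
      ↔ (s((φ u).1.1, (φ v).1.1) ∈ {e | e ∈ G.incidenceSet ((φ v).1.1)
      ∧ T (fun x => (φ x).1.1) v e = 1}) := by
    rw [hTu, hTv, hcomp (fun x => (φ x).1.1) u v huv]
  have hSS : (s((φ u).1.1, (φ v).1.1) ∈ (φ u).1.2)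
      ↔ (s((φ u).1.1, (φ v).1.1) ∈ (φ v).1.2) := by
    rw [Set.mem_symmDiff] at hnm
    push_neg at hnm
    exact Iff.intro hnm.1 hnm.2
  show s((φ u).1.1, (φ v).1.1) ∉ symmDiff
      (symmDiff (φ u).1.2
        {e | e ∈ G.incidenceSet ((φ u).1.1) ∧ T (fun x => (φ x).1.1) u e = 1})
      (symmDiff (φ v).1.2
        {e | e ∈ G.incidenceSet ((φ v).1.1) ∧ T (fun x => (φ x).1.1) v e = 1})
  intro hmem
  simp only [Set.mem_symmDiff] at hmem
  tauto

private lemma twmap_twmap {n m : ℕ} (G : SimpleGraph (Fin n)) (U₁ U₂ : Set (Fin n))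
    (T : (Fin m → Fin n) → Fin m → Sym2 (Fin n) → ZMod 2)
    (hpar : ∀ (h : Fin m → Fin n) (f : Fin m),
      Even {e | e ∈ G.incidenceSet (h f) ∧ T h f e = 1}.ncard ↔ (h f ∉ U₂ ↔ h f ∉ U₁))
    (hpar' : ∀ (h : Fin m → Fin n) (f : Fin m),
      Even {e | e ∈ G.incidenceSet (h f) ∧ T h f e = 1}.ncard ↔ (h f ∉ U₁ ↔ h f ∉ U₂))
    (φ : Fin m → CFIvert G U₁) :
    twmap G U₂ U₁ T hpar' (twmap G U₁ U₂ T hpar φ) = φ := by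
  funext f
  apply Subtype.ext
  refine Prod.ext_iff.2 ⟨rfl, ?_⟩
  have hproj : (fun x => ((twmap G U₁ U₂ T hpar φ) x).1.1) = (fun x => (φ x).1.1) :=
    funext fun _ => rfl
  show symmDiff
      (symmDiff (φ f).1.2
        {e | e ∈ G.incidenceSet ((φ f).1.1) ∧ T (fun x => (φ x).1.1) f e = 1})
      {e | e ∈ G.incidenceSet ((φ f).1.1)
        ∧ T (fun x => ((twmap G U₁ U₂ T hpar φ) x).1.1) f e = 1} = (φ f).1.2
  rw [hproj]
  exact symmDiff_symmDiff_cancel_right _ _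

end Final
/-- If Robber wins the non-monotone `q`-round `k`-cops-and-robber game on a connected
graph `G`, then `G_0` and `G_1` are homomorphism indistinguishable over `T^k_q`. -/
theorem closedness_td_core (k : ℕ) (hk : 1 ≤ k) (q : ℕ) {n : ℕ} (G : SimpleGraph (Fin n))
    (hconn : G.Connected) (hrob : RobberWinsGame G k q) :
    ∀ U : Set (Fin n), Odd U.ncard → HomIndist (Tclass k q) (CFI G ∅) (CFI G U) := by
  intro U hU A hA
  classical
  obtain ⟨cov⟩ := hA
  have key' := fun h : Fin A.1 → Fin n => key G A.2 cov U hU hconn hrob hk h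
  choose T hT1 hT2 using key'
  have hpar₂ : ∀ (h : Fin A.1 → Fin n) (f : Fin A.1),
      Even {e | e ∈ G.incidenceSet (h f) ∧ T h f e = 1}.ncard
        ↔ ((h f ∉ U) ↔ (h f ∉ (∅ : Set (Fin n)))) := by
    intro h f
    have := hT1 h f
    simp only [Set.mem_empty_iff_false, not_false_eq_true, iff_true]
    exact this
  have hpar₁ : ∀ (h : Fin A.1 → Fin n) (f : Fin A.1),
      Even {e | e ∈ G.incidenceSet (h f) ∧ T h f e = 1}.ncard
        ↔ ((h f ∉ (∅ : Set (Fin n))) ↔ (h f ∉ U)) := by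
    intro h f
    have := hT1 h f
    simp only [Set.mem_empty_iff_false, not_false_eq_true, true_iff]
    exact this
  show homCount A.2 (CFI G ∅) = homCount A.2 (CFI G U)
  unfold homCount
  rw [← Nat.card_coe_set_eq, ← Nat.card_coe_set_eq]
  refine Nat.card_congr
    ⟨fun φ => ⟨twmap G ∅ U T hpar₂ φ.1,
        twmap_hom G A.2 ∅ U T hpar₂ hT2 φ.1 φ.2⟩,
      fun ψ => ⟨twmap G U ∅ T hpar₁ ψ.1,
        twmap_hom G A.2 U ∅ T hpar₁ hT2 ψ.1 ψ.2⟩,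
      fun φ => Subtype.ext (twmap_twmap G ∅ U T hpar₂ hpar₁ φ.1),
      fun ψ => Subtype.ext (twmap_twmap G U ∅ T hpar₁ hpar₂ ψ.1)⟩
end
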